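/- arXiv:0905.3279 — 4 statements merged into one kernel-verified Lean document; each statement's English description precedes it below -/
import Mathlib

section
/- Let A ⊆ ℝ^d be compact and r > 0 with r > diam A. Then every point z on the boundary of the open r-parallel set A_{<r} is a regular point of the distance function d_A, i.e., z does not belong to the convex hull of the set Σ_A(z) = {a ∈ A : |z − a| = dist(z, A)} of nearest points of A to z. -/
open MeasureTheory Metric Filter Set
open scoped Topology RealInnerProductSpace

theorem stmt_1 (d : ℕ) (A : Set (EuclideanSpace ℝ (Fin d)))
    (hA : IsCompact A) (hAne : A.Nonempty) (r : ℝ) (hr : Metric.diam A < r)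
    (z : EuclideanSpace ℝ (Fin d)) (hz : z ∈ frontier (Metric.thickening r A)) :
    z ∉ convexHull ℝ {a ∈ A | dist z a = Metric.infDist z A} := by
  intro hmem
  have hr0 : 0 < r := lt_of_le_of_lt Metric.diam_nonneg hr
  have hinf : Metric.infDist z A = r := by
    have h1 : Metric.infEDist z A = ENNReal.ofReal r :=
      Metric.frontier_thickening_subset A hz
    rw [Metric.infDist, h1, ENNReal.toReal_ofReal hr0.le]
  set S := {a ∈ A | dist z a = Metric.infDist z A} with hS
  obtain ⟨a, haS⟩ : S.Nonempty := by
    by_contra h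
    rw [Set.not_nonempty_iff_eq_empty] at h
    rw [h, convexHull_empty] at hmem
    exact hmem
  have hza : ‖z - a‖ = r := by
    rw [← dist_eq_norm]; rw [haS.2, hinf]
  have key : ∀ b ∈ S, ⟪z - a, b⟫ ≤ ⟪z - a, z⟫ - r ^ 2 / 2 := by
    intro b hbS
    have hzb : ‖z - b‖ = r := by
      rw [← dist_eq_norm]; rw [hbS.2, hinf]
    have hab : ‖b - a‖ < r := by
      rw [← dist_eq_norm]
      exact lt_of_le_of_lt (Metric.dist_le_diam_of_mem hA.isBounded hbS.1 haS.1) hr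
    have hab0 : 0 ≤ ‖b - a‖ := norm_nonneg _
    have hid : ‖(z - a) - (z - b)‖ ^ 2
        = ‖z - a‖ ^ 2 - 2 * ⟪z - a, z - b⟫ + ‖z - b‖ ^ 2 := norm_sub_sq_real _ _
    have heq : (z - a) - (z - b) = b - a := by abel
    rw [heq, hza, hzb] at hid
    have hsub : ⟪z - a, z - b⟫ = ⟪z - a, z⟫ - ⟪z - a, b⟫ := inner_sub_right _ _ _
    nlinarith [hid, hsub]
  have hC : Convex ℝ {x : EuclideanSpace ℝ (Fin d) | ⟪z - a, x⟫ ≤ ⟪z - a, z⟫ - r ^ 2 / 2} :=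
    convex_halfSpace_le ⟨fun x y => inner_add_right _ _ _,
      fun c x => real_inner_smul_right _ _ _⟩ _
  have h2 : ⟪z - a, z⟫ ≤ ⟪z - a, z⟫ - r ^ 2 / 2 := convexHull_min key hC hmem
  nlinarith [mul_pos hr0 hr0]
end

section
/- For every compact set A ⊂ ℝ^d, lim_{r→0} r · H^{d−1}(∂A_r) = 0. -/
open MeasureTheory Metric Filter Set
open scoped Topology ENNReal RealInnerProductSpace NNReal

namespace Stmt7Aux

variable {d : ℕ}

local notation "E" => EuclideanSpace ℝ (Fin d)

/-- Generic lemma: if `P` is injective with Lipschitz inverse on `T`, Hausdorff measure of `T`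
is controlled by that of `P '' T`. -/
lemma graph_bound {X : Type*} [MetricSpace X] [MeasurableSpace X] [BorelSpace X]
    (P : X → X) (T : Set X) {m : ℝ} (hm : 0 ≤ m) (K : ℝ≥0)
    (hkey : ∀ x ∈ T, ∀ y ∈ T, dist x y ≤ K * dist (P x) (P y)) :
    μH[m] T ≤ (K : ℝ≥0∞) ^ m * μH[m] (P '' T) := by
  have hinj : Set.InjOn P T := by
    intro x hx y hy hxy
    have h := hkey x hx y hy
    rw [hxy] at h
    simp at h
    exact h
  rcases T.eq_empty_or_nonempty with hT | ⟨x₀, hx₀⟩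
  · simp [hT]
  haveI : Nonempty X := ⟨x₀⟩
  set f := Function.invFunOn P T with hf
  have himg : f '' (P '' T) = T := hinj.invFunOn_image Subset.rfl
  have hlip : LipschitzOnWith K f (P '' T) := by
    rw [lipschitzOnWith_iff_dist_le_mul]
    rintro y₁ ⟨x₁, hx₁, rfl⟩ y₂ ⟨x₂, hx₂, rfl⟩
    have h₁m : f (P x₁) ∈ T := Function.invFunOn_mem ⟨x₁, hx₁, rfl⟩
    have h₂m : f (P x₂) ∈ T := Function.invFunOn_mem ⟨x₂, hx₂, rfl⟩
    have h₁ : P (f (P x₁)) = P x₁ := Function.invFunOn_eq ⟨x₁, hx₁, rfl⟩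
    have h₂ : P (f (P x₂)) = P x₂ := Function.invFunOn_eq ⟨x₂, hx₂, rfl⟩
    calc dist (f (P x₁)) (f (P x₂)) ≤ K * dist (P (f (P x₁))) (P (f (P x₂))) :=
          hkey _ h₁m _ h₂m
      _ = K * dist (P x₁) (P x₂) := by rw [h₁, h₂]
  calc μH[m] T = μH[m] (f '' (P '' T)) := by rw [himg]
    _ ≤ (K : ℝ≥0∞) ^ m * μH[m] (P '' T) := hlip.hausdorffMeasure_image_le hm


/-- The localized pieces of the level set. -/
def Tset (A : Set (EuclideanSpace ℝ (Fin d))) (r : ℝ) (z v : EuclideanSpace ℝ (Fin d)) :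
    Set (EuclideanSpace ℝ (Fin d)) :=
  {x | dist x z ≤ r/4 ∧ infDist x A = r ∧ ∃ a ∈ A, dist x a = r ∧ 7/8 * r ≤ ⟪x - a, v⟫}

lemma arith {r W Pn t iq iq' ipq ipq' wq wq' : ℝ} (hr : 0 < r) (hW : W ≤ r/2)
    (hW0 : 0 ≤ W) (hP0 : 0 ≤ Pn)
    (hiq : 7/8*r ≤ iq) (hiq' : 7/8*r ≤ iq') (hiqr : iq ≤ r) (hiq'r : iq' ≤ r)
    (h1 : wq ≥ -W^2/2) (h2 : wq' ≤ W^2/2)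
    (e1 : wq = t*iq + ipq) (e2 : wq' = t*iq' + ipq')
    (hpq1 : |ipq| ≤ Pn*(r/2)) (hpq2 : |ipq'| ≤ Pn*(r/2))
    (hw2 : W^2 = t^2 + Pn^2) : W ≤ 3*Pn := by
  have habs1 := abs_le.mp hpq1
  have habs2 := abs_le.mp hpq2
  have hw4 : W^2 ≤ (r/2) * W := by nlinarith
  have ht : |t| ≤ 2/7 * W + 4/7 * Pn := by
    rcases le_or_gt t 0 with htn | htp
    · rw [abs_of_nonpos htn]
      have h5 : (-t) * (7/8 * r) ≤ (-t) * iq := by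
        apply mul_le_mul_of_nonneg_left hiq (by linarith)
      have key : (7/8 * (-t)) * r ≤ (W/4 + Pn/2) * r := by nlinarith
      have := le_of_mul_le_mul_right key hr
      linarith
    · rw [abs_of_pos htp]
      have h5 : t * (7/8 * r) ≤ t * iq' := by
        apply mul_le_mul_of_nonneg_left hiq' (by linarith)
      have key : (7/8 * t) * r ≤ (W/4 + Pn/2) * r := by nlinarith
      have := le_of_mul_le_mul_right key hr
      linarith
  nlinarith [sq_abs t, le_abs_self t, neg_abs_le t, abs_nonneg t]

lemma inner_algebra {r : ℝ} (hr : 0 < r) (v w q q' : E) (hv : ‖v‖ = 1)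
    (hwr : ‖w‖ ≤ r/2) (hqn : ‖q‖ = r) (hq'n : ‖q'‖ = r)
    (hqv : 7/8 * r ≤ ⟪q, v⟫) (hq'v : 7/8 * r ≤ ⟪q', v⟫)
    (h1 : ⟪w, q⟫ ≥ -‖w‖^2/2) (h2 : ⟪w, q'⟫ ≤ ‖w‖^2/2) :
    ‖w‖ ≤ 3 * ‖w - ⟪w, v⟫ • v‖ := by
  obtain ⟨t, htd⟩ : ∃ t : ℝ, t = ⟪w, v⟫ := ⟨_, rfl⟩
  obtain ⟨p, hp⟩ : ∃ p : E, p = w - t • v := ⟨_, rfl⟩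
  rw [← htd, ← hp]
  have hpv : ⟪p, v⟫ = 0 := by
    rw [hp, inner_sub_left, real_inner_smul_left, real_inner_self_eq_norm_sq, hv]
    rw [htd]; ring
  have hwpt : w = p + t • v := by rw [hp]; abel
  have hw2 : ‖w‖^2 = t^2 + ‖p‖^2 := by
    rw [hwpt, norm_add_sq_real, real_inner_smul_right, hpv, norm_smul, hv]
    rw [Real.norm_eq_abs]
    ring_nf
    rw [sq_abs]
  have hpq : ∀ (u : E), ‖u‖ = r → 7/8 * r ≤ ⟪u, v⟫ → |⟪p, u⟫| ≤ ‖p‖ * (r/2) := by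
    intro u hun huv
    have h0 : ⟪p, u⟫ = ⟪p, u - ⟪u, v⟫ • v⟫ := by
      rw [inner_sub_right, real_inner_smul_right, hpv]
      ring
    rw [h0]
    have hcs := abs_real_inner_le_norm p (u - ⟪u, v⟫ • v)
    have hbound : ‖u - ⟪u, v⟫ • v‖ ≤ r/2 := by
      have hsq : ‖u - ⟪u, v⟫ • v‖^2 = ‖u‖^2 - ⟪u, v⟫^2 := by
        rw [norm_sub_sq_real, real_inner_smul_right, norm_smul, hv, Real.norm_eq_abs]
        ring_nf
        rw [sq_abs]
        ring
      have hc2 : ⟪u, v⟫^2 ≥ (7/8 * r)^2 := by nlinarith [hr.le]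
      nlinarith [norm_nonneg (u - ⟪u, v⟫ • v), hr.le]
    calc |⟪p, u - ⟪u, v⟫ • v⟫| ≤ ‖p‖ * ‖u - ⟪u, v⟫ • v‖ := hcs
      _ ≤ ‖p‖ * (r/2) := mul_le_mul_of_nonneg_left hbound (norm_nonneg p)
  have hpq1 := hpq q hqn hqv
  have hpq2 := hpq q' hq'n hq'v
  have hdec : ∀ (u : E), ⟪w, u⟫ = t * ⟪u, v⟫ + ⟪p, u⟫ := by
    intro u
    rw [hwpt, inner_add_left, real_inner_smul_left, real_inner_comm v u]
    ring
  have hqvr : ⟪q, v⟫ ≤ r := by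
    nlinarith [abs_real_inner_le_norm q v, le_abs_self (⟪q, v⟫)]
  have hq'vr : ⟪q', v⟫ ≤ r := by
    nlinarith [abs_real_inner_le_norm q' v, le_abs_self (⟪q', v⟫)]
  exact arith hr hwr (norm_nonneg w) (norm_nonneg p) hqv hq'v hqvr hq'vr h1 h2
    (hdec q) (hdec q') hpq1 hpq2 hw2

lemma key_ineq {A : Set (EuclideanSpace ℝ (Fin d))} {r : ℝ} (hr : 0 < r)
    {v : E} (hv : ‖v‖ = 1) {z : E} :
    ∀ x ∈ Tset A r z v, ∀ y ∈ Tset A r z v,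
      dist x y ≤ 3 * dist (x - ⟪x, v⟫ • v) (y - ⟪y, v⟫ • v) := by
  rintro x ⟨hxz, hxS, a, haA, hxa, hav⟩ y ⟨hyz, hyS, b, hbA, hyb, hbv⟩
  have hdist1 : dist x y = ‖y - x‖ := by rw [dist_eq_norm, ← norm_neg]; congr 1; abel
  have hdist2 : dist (x - ⟪x, v⟫ • v) (y - ⟪y, v⟫ • v)
      = ‖(y - x) - ⟪y - x, v⟫ • v‖ := by
    rw [dist_eq_norm, ← norm_neg]
    congr 1
    rw [inner_sub_left, sub_smul]
    abel
  rw [hdist1, hdist2]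
  apply inner_algebra hr v (y - x) (x - a) (y - b) hv
  · have h := dist_triangle_right y x z
    rw [dist_eq_norm] at h
    linarith
  · rwa [← dist_eq_norm]
  · rwa [← dist_eq_norm]
  · exact hav
  · exact hbv
  · have hya : dist y a ≥ r := by rw [← hyS]; exact infDist_le_dist_of_mem haA
    have hwq : y - a = (y - x) + (x - a) := by abel
    have hge : ‖(y - x) + (x - a)‖^2 ≥ ‖x - a‖^2 := by
      rw [← hwq]
      have h1 : ‖y - a‖ = dist y a := (dist_eq_norm y a).symm
      have h2 : ‖x - a‖ = dist x a := (dist_eq_norm x a).symm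
      nlinarith [norm_nonneg (y - a)]
    rw [norm_add_sq_real] at hge
    nlinarith
  · have hxb : dist x b ≥ r := by rw [← hxS]; exact infDist_le_dist_of_mem hbA
    have hwq : x - b = (y - b) - (y - x) := by abel
    have hge : ‖(y - b) - (y - x)‖^2 ≥ ‖y - b‖^2 := by
      rw [← hwq]
      have h1 : ‖x - b‖ = dist x b := (dist_eq_norm x b).symm
      have h2 : ‖y - b‖ = dist y b := (dist_eq_norm y b).symm
      nlinarith [norm_nonneg (x - b)]
    rw [norm_sub_sq_real] at hge
    nlinarith [real_inner_comm (y - x) (y - b)]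


lemma hyperplane_bound (hd : 0 < d) (v : E) (hv : ‖v‖ = 1) (c : E) {ρ : ℝ} (hρ : 0 ≤ ρ)
    {s : Set E} (hs : s ⊆ (((ℝ ∙ v)ᗮ : Submodule ℝ (EuclideanSpace ℝ (Fin d))) : Set E) ∩ closedBall c ρ) :
    μH[(d:ℝ) - 1] s ≤
      (((d : ℝ≥0) ^ ((1:ℝ)/2) : ℝ≥0) : ℝ≥0∞) ^ ((d:ℝ) - 1) * ENNReal.ofReal ((4 * ρ) ^ (d - 1)) := by
  have hm : (0:ℝ) ≤ (d:ℝ) - 1 := by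
    have : (1:ℝ) ≤ (d:ℝ) := by exact_mod_cast hd
    linarith
  rcases s.eq_empty_or_nonempty with rfl | ⟨w₀, hw₀⟩
  · simp
  have hv0 : v ≠ 0 := by intro h; rw [h] at hv; simp at hv
  set m := d - 1 with hmdef
  have hdm : m + 1 = d := Nat.succ_pred_eq_of_pos hd
  haveI : Fact (Module.finrank ℝ (EuclideanSpace ℝ (Fin d)) = m + 1) :=
    ⟨by rw [finrank_euclideanSpace_fin, hdm]⟩
  set K : Submodule ℝ (EuclideanSpace ℝ (Fin d)) := (ℝ ∙ v)ᗮ with hK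
  let b : OrthonormalBasis (Fin m) ℝ K := OrthonormalBasis.fromOrthogonalSpanSingleton m hv0
  let f : EuclideanSpace ℝ (Fin m) ≃ₗᵢ[ℝ] K := b.repr.symm
  set g : EuclideanSpace ℝ (Fin m) → E := fun x => ((f x : K) : E) with hg
  have hgiso : Isometry g := Submodule.subtypeₗᵢ K |>.isometry.comp f.isometry
  have hrange : Set.range g = (K : Set E) := by
    ext x
    constructor
    · rintro ⟨y, rfl⟩; exact (f y).2
    · intro hx; exact ⟨f.symm ⟨x, hx⟩, by simp [hg]⟩
  have hsub : s ⊆ Set.range g := fun x hx => hrange ▸ (hs hx).1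
  set t : Set (EuclideanSpace ℝ (Fin m)) := g ⁻¹' s with ht
  have hgt : g '' t = s := Set.image_preimage_eq_of_subset hsub
  have h1 : μH[(d:ℝ) - 1] s = μH[(d:ℝ) - 1] t := by
    rw [← hgt]; exact hgiso.hausdorffMeasure_image (Or.inl hm) t
  -- t is contained in a ball of radius 2ρ
  obtain ⟨x₀, hx₀⟩ : t.Nonempty := by
    rcases hsub hw₀ with ⟨y, rfl⟩
    exact ⟨y, hw₀⟩
  have htball : t ⊆ closedBall x₀ (2 * ρ) := by
    intro x hx
    have h1' := (hs hx).2
    have h2' := (hs hx₀).2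
    rw [mem_closedBall] at *
    have : dist (g x) (g x₀) ≤ 2 * ρ := by
      calc dist (g x) (g x₀) ≤ dist (g x) c + dist (g x₀) c := dist_triangle_right _ _ _
        _ ≤ ρ + ρ := add_le_add h1' h2'
        _ = 2 * ρ := by ring
    rwa [hgiso.dist_eq] at this
  -- move to sup-metric pi space
  set e : EuclideanSpace ℝ (Fin m) → (Fin m → ℝ) := ⇑(WithLp.equiv 2 (Fin m → ℝ)) with he
  have hanti : AntilipschitzWith ((Fintype.card (Fin m) : ℝ≥0) ^ ((1:ℝ)/2)) e := by
    have := PiLp.antilipschitzWith_ofLp 2 (fun _ : Fin m => ℝ)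
    simpa [he] using (show AntilipschitzWith _ ⇑(WithLp.equiv 2 (Fin m → ℝ)) from this)
  have h2 : μH[(d:ℝ) - 1] t ≤
      (((Fintype.card (Fin m) : ℝ≥0) ^ ((1:ℝ)/2) : ℝ≥0) : ℝ≥0∞) ^ ((d:ℝ)-1) * μH[(d:ℝ)-1] (e '' t) :=
    hanti.le_hausdorffMeasure_image hm t
  have hlip : LipschitzWith 1 e := PiLp.lipschitzWith_ofLp 2 (fun _ : Fin m => ℝ)
  have himg : e '' t ⊆ closedBall (e x₀) (2 * ρ) := by
    rintro y ⟨x, hx, rfl⟩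
    rw [mem_closedBall]
    calc dist (e x) (e x₀) ≤ 1 * dist x x₀ := hlip.dist_le_mul x x₀
      _ ≤ 2 * ρ := by rw [one_mul]; exact htball hx
  have hpi : (μH[(d:ℝ)-1] : Measure (Fin m → ℝ)) = volume := by
    have : ((Fintype.card (Fin m) : ℝ)) = (d:ℝ) - 1 := by
      rw [Fintype.card_fin]
      have : ((m:ℝ)) + 1 = d := by exact_mod_cast hdm
      linarith
    rw [← this]
    exact hausdorffMeasure_pi_real
  have h3 : μH[(d:ℝ)-1] (e '' t) ≤ ENNReal.ofReal ((4 * ρ) ^ m) := by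
    rw [hpi]
    calc volume (e '' t) ≤ volume (closedBall (e x₀) (2 * ρ)) := measure_mono himg
      _ = ENNReal.ofReal ((2 * (2 * ρ)) ^ m) := by
          rw [Real.volume_pi_closedBall _ (by linarith)]
          simp
      _ = ENNReal.ofReal ((4 * ρ) ^ m) := by ring_nf
  calc μH[(d:ℝ)-1] s = μH[(d:ℝ)-1] t := h1
    _ ≤ _ := h2
    _ ≤ (((Fintype.card (Fin m) : ℝ≥0) ^ ((1:ℝ)/2) : ℝ≥0) : ℝ≥0∞) ^ ((d:ℝ)-1) *
          ENNReal.ofReal ((4 * ρ) ^ m) := by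
        exact mul_le_mul_right h3 _
    _ ≤ _ := by
        apply mul_le_mul_left
        apply ENNReal.rpow_le_rpow _ hm
        apply ENNReal.coe_le_coe.mpr
        apply NNReal.rpow_le_rpow _ (by norm_num)
        simp only [Fintype.card_fin]
        exact_mod_cast Nat.sub_le d 1


lemma mem_cthickening_of_infDist_le' {A : Set (EuclideanSpace ℝ (Fin d))} (hAne : A.Nonempty)
    {s : ℝ} {x : EuclideanSpace ℝ (Fin d)} (h : infDist x A ≤ s) : x ∈ cthickening s A := by
  rw [mem_cthickening_iff]
  have hne : Metric.infEDist x A ≠ ⊤ := (Metric.infEdist_ne_top hAne)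
  rw [← ENNReal.ofReal_toReal hne]
  exact ENNReal.ofReal_le_ofReal h

lemma infdist_level_compact {A : Set (EuclideanSpace ℝ (Fin d))} (hA : IsCompact A)
    (hAne : A.Nonempty) {r : ℝ} (hr : 0 < r) :
    IsCompact {x : E | infDist x A = r} := by
  apply Metric.isCompact_of_isClosed_isBounded
  · exact isClosed_eq (continuous_infDist_pt A) continuous_const
  · apply Bornology.IsBounded.subset (hA.isBounded.cthickening (δ := r))
    intro x hx
    exact mem_cthickening_of_infDist_le' hAne (le_of_eq hx)

lemma packing {A : Set (EuclideanSpace ℝ (Fin d))} (hA : IsCompact A)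
    (hAne : A.Nonempty) {r : ℝ} (hr : 0 < r) :
    ∃ M : Finset (EuclideanSpace ℝ (Fin d)),
      (↑M ⊆ {x : E | infDist x A = r}) ∧
      ({x : E | infDist x A = r} ⊆ ⋃ z ∈ M, closedBall z (r/4)) ∧
      (M.card : ℝ≥0∞) * volume (ball (0:E) (r/32)) ≤ volume (cthickening r A \ A) := by
  classical
  set S : Set E := {x : E | infDist x A = r} with hS
  have hSc : IsCompact S := infdist_level_compact hA hAne hr
  -- maximal separated set
  set 𝒮 : Set (Set E) := {F | F ⊆ S ∧ F.Pairwise fun a b => r/4 ≤ dist a b} with h𝒮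
  obtain ⟨M₀, -, hM₀max⟩ := zorn_subset_nonempty 𝒮 (by
      intro c hc hchain hcne
      refine ⟨⋃₀ c, ⟨?_, ?_⟩, fun s hs => subset_sUnion_of_mem hs⟩
      · exact sUnion_subset fun s hs => (hc hs).1
      · intro a ha b hb hab
        obtain ⟨sa, hsa, hasa⟩ := ha
        obtain ⟨sb, hsb, hbsb⟩ := hb
        rcases hchain.total hsa hsb with h | h
        · exact (hc hsb).2 (h hasa) hbsb hab
        · exact (hc hsa).2 hasa (h hbsb) hab)
    ∅ ⟨empty_subset S, pairwise_empty _⟩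
  obtain ⟨hM₀S, hM₀sep⟩ := hM₀max.prop
  -- M₀ is finite
  have hM₀fin : M₀.Finite := by
    obtain ⟨t, htfin, hcov⟩ : ∃ t : Set E, t.Finite ∧ S ⊆ ⋃ y ∈ t, ball y (r/16) :=
      (Metric.totallyBounded_iff.mp hSc.totallyBounded) (r/16) (by positivity)
    have : M₀ ⊆ ⋃ y ∈ t, (M₀ ∩ ball y (r/16)) := by
      intro x hx
      obtain ⟨_, ⟨y, rfl⟩, ⟨_, ⟨hy, rfl⟩, hxy⟩⟩ := hcov (hM₀S hx)
      exact mem_biUnion hy ⟨hx, hxy⟩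
    apply Set.Finite.subset (Set.Finite.biUnion htfin (fun y _ => ?_)) this
    apply Set.Subsingleton.finite
    intro a ⟨haM, hab⟩ b ⟨hbM, hbb⟩
    by_contra hne
    have := hM₀sep haM hbM hne
    have : dist a b < r/8 := by
      calc dist a b ≤ dist a y + dist b y := dist_triangle_right a b y
        _ < r/16 + r/16 := add_lt_add (mem_ball.mp hab) (mem_ball.mp hbb)
        _ = r/8 := by ring
    linarith
  set M : Finset E := hM₀fin.toFinset with hM
  have hMS : ↑M ⊆ S := by rw [Set.Finite.coe_toFinset]; exact hM₀S
  refine ⟨M, hMS, ?_, ?_⟩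
  · -- coverage
    intro x hx
    by_contra hcon
    simp only [mem_iUnion, not_exists] at hcon
    have hxM : ∀ z ∈ M₀, r/4 ≤ dist x z := by
      intro z hz
      by_contra h
      push_neg at h
      exact hcon z (hM₀fin.mem_toFinset.mpr hz) (mem_closedBall.mpr h.le)
    have hins : insert x M₀ ∈ 𝒮 := by
      constructor
      · exact insert_subset hx hM₀S
      · apply hM₀sep.insert
        intro z hz hne
        constructor
        · exact hxM z hz
        · rw [dist_comm]; exact hxM z hz
    have hsub := hM₀max.2 hins (subset_insert x M₀)
    have hxM₀ : x ∈ M₀ := hsub (mem_insert x M₀)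
    have := hxM x hxM₀
    simp at this
    linarith
  · -- volume counting
    -- choose nearest points
    have hnear : ∀ z ∈ M₀, ∃ a ∈ A, dist z a = r := by
      intro z hz
      obtain ⟨a, haA, hda⟩ := hA.exists_infDist_eq_dist hAne z
      exact ⟨a, haA, by rw [← hda]; exact hM₀S hz⟩
    choose! na hnaA hnad using hnear
    set y : E → E := fun z => z + (1/16 : ℝ) • (na z - z) with hy
    have hyA : ∀ z ∈ M₀, infDist (y z) A = 15/16 * r := by
      intro z hz
      have hdza : dist (y z) (na z) = 15/16 * r := by
        rw [dist_eq_norm]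
        have : y z - na z = (15/16 : ℝ) • (z - na z) := by
          rw [hy]; simp only; module
        rw [this, norm_smul, ← dist_eq_norm, hnad z hz]
        simp [Real.norm_eq_abs]
      have hdzy : dist z (y z) = 1/16 * r := by
        rw [dist_eq_norm]
        have : z - y z = (-(1/16) : ℝ) • (na z - z) := by
          rw [hy]; module
        rw [this, norm_smul, ← dist_eq_norm_sub', hnad z hz]
        simp [Real.norm_eq_abs]
      apply le_antisymm
      · calc infDist (y z) A ≤ dist (y z) (na z) := infDist_le_dist_of_mem (hnaA z hz)
          _ = 15/16 * r := hdza
      · have h1 : infDist z A ≤ infDist (y z) A + dist z (y z) := infDist_le_infDist_add_dist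
        have h2 : infDist z A = r := hM₀S hz
        rw [h2, hdzy] at h1
        linarith
    -- balls are inside the annulus
    have hball : ∀ z ∈ M₀, ball (y z) (r/32) ⊆ cthickening r A \ A := by
      intro z hz w hw
      rw [mem_ball] at hw
      have hle : infDist w A ≤ infDist (y z) A + dist w (y z) := infDist_le_infDist_add_dist
      have hge : infDist (y z) A ≤ infDist w A + dist (y z) w := infDist_le_infDist_add_dist
      rw [hyA z hz] at hle hge
      rw [dist_comm] at hge
      constructor
      · exact mem_cthickening_of_infDist_le' hAne (by linarith)
      · intro hwA
        have : infDist w A = 0 := by rw [infDist_zero_of_mem hwA]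
        linarith
    -- disjointness
    have hdisj : (↑M : Set E).PairwiseDisjoint (fun z => ball (y z) (r/32)) := by
      intro z₁ hz₁ z₂ hz₂ hne
      rw [Set.Finite.coe_toFinset] at hz₁ hz₂
      apply Metric.ball_disjoint_ball
      have hsep := hM₀sep hz₁ hz₂ hne
      have h1 : dist z₁ (y z₁) = dist z₁ (y z₁) := rfl
      have hd1 : dist (y z₁) z₁ ≤ r/16 := by
        rw [dist_comm, dist_eq_norm]
        have : z₁ - y z₁ = (-(1/16) : ℝ) • (na z₁ - z₁) := by rw [hy]; module
        rw [this, norm_smul, ← dist_eq_norm_sub', hnad z₁ hz₁]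
        simp [Real.norm_eq_abs]
        linarith
      have hd2 : dist (y z₂) z₂ ≤ r/16 := by
        rw [dist_comm, dist_eq_norm]
        have : z₂ - y z₂ = (-(1/16) : ℝ) • (na z₂ - z₂) := by rw [hy]; module
        rw [this, norm_smul, ← dist_eq_norm_sub', hnad z₂ hz₂]
        simp [Real.norm_eq_abs]
        linarith
      have : dist z₁ z₂ ≤ dist z₁ (y z₁) + dist (y z₁) (y z₂) + dist (y z₂) z₂ :=
        dist_triangle4 z₁ (y z₁) (y z₂) z₂
      rw [dist_comm z₁ (y z₁)] at this
      linarith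
    -- sum volumes
    have hsum : ∑ z ∈ M, volume (ball (y z) (r/32)) ≤ volume (cthickening r A \ A) := by
      rw [← measure_biUnion_finset hdisj (fun z _ => measurableSet_ball)]
      apply measure_mono
      apply iUnion₂_subset
      intro z hz
      exact hball z (hM₀fin.mem_toFinset.mp hz)
    have hvol : ∀ z : E, volume (ball (y z) (r/32)) = volume (ball (0:E) (r/32)) := by
      intro z
      exact Measure.addHaar_ball_center volume (y z) (r/32)
    rw [Finset.sum_congr rfl (fun z _ => hvol z)] at hsum
    rw [Finset.sum_const] at hsum
    simpa using hsum


lemma norm_proj_le (v : E) (hv : ‖v‖ = 1) (w : E) : ‖w - ⟪w, v⟫ • v‖ ≤ ‖w‖ := by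
  have h : ‖w - ⟪w, v⟫ • v‖^2 = ‖w‖^2 - ⟪w, v⟫^2 := by
    rw [norm_sub_sq_real, real_inner_smul_right, norm_smul, hv, Real.norm_eq_abs]
    ring_nf
    rw [sq_abs]
    ring
  nlinarith [norm_nonneg (w - ⟪w, v⟫ • v), norm_nonneg w, sq_nonneg (⟪w, v⟫)]

/-- A finite 1/2-net on the unit sphere. -/
lemma sphere_net : ∃ V : Finset (EuclideanSpace ℝ (Fin d)),
    (∀ v ∈ V, ‖v‖ = 1) ∧ ∀ u : E, ‖u‖ = 1 → ∃ v ∈ V, dist u v < 1/2 := by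
  classical
  have hc : IsCompact (sphere (0:E) 1) := isCompact_sphere 0 1
  have hcov : sphere (0:E) 1 ⊆ ⋃ v ∈ sphere (0:E) 1, ball v (1/2) := by
    intro u hu
    exact mem_biUnion hu (mem_ball_self (by norm_num))
  obtain ⟨b, hbsub, hbfin, hbcov⟩ :=
    hc.elim_finite_subcover_image (fun v _ => isOpen_ball) hcov
  refine ⟨hbfin.toFinset, ?_, ?_⟩
  · intro v hv
    have := hbsub (hbfin.mem_toFinset.mp hv)
    rwa [mem_sphere, dist_zero_right] at this
  · intro u hu
    have : u ∈ ⋃ v ∈ b, ball v (1/2) := hbcov (by rwa [mem_sphere, dist_zero_right])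
    obtain ⟨v, hv, huv⟩ := mem_iUnion₂.mp this
    exact ⟨v, hbfin.mem_toFinset.mpr hv, mem_ball.mp huv⟩

/-- Covering of the level set by the pieces. -/
lemma level_cover {A : Set (EuclideanSpace ℝ (Fin d))} (hA : IsCompact A) (hAne : A.Nonempty)
    {r : ℝ} (hr : 0 < r) (M V : Finset (EuclideanSpace ℝ (Fin d)))
    (hMcov : {x : E | infDist x A = r} ⊆ ⋃ z ∈ M, closedBall z (r/4))
    (hVunit : ∀ v ∈ V, ‖v‖ = 1)
    (hV : ∀ u : E, ‖u‖ = 1 → ∃ v ∈ V, dist u v < 1/2) :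
    {x : E | infDist x A = r} ⊆ ⋃ z ∈ M, ⋃ v ∈ V, Tset A r z v := by
  intro x hx
  obtain ⟨a, haA, hda⟩ := hA.exists_infDist_eq_dist hAne x
  have hxa : dist x a = r := by rw [← hda]; exact hx
  have hxar : ‖x - a‖ = r := by rwa [← dist_eq_norm]
  set u : E := (r⁻¹ : ℝ) • (x - a) with hu
  have hun : ‖u‖ = 1 := by
    rw [hu, norm_smul, hxar, Real.norm_eq_abs, abs_of_pos (inv_pos.mpr hr)]
    field_simp
  obtain ⟨v, hvV, huv⟩ := hV u hun
  have hvn : ‖v‖ = 1 := hVunit v hvV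
  have hinner : (7:ℝ)/8 * r ≤ ⟪x - a, v⟫ := by
    have hxu : x - a = r • u := by
      rw [hu, smul_smul, mul_inv_cancel₀ hr.ne', one_smul]
    have huvn : ‖u - v‖ < 1/2 := by rwa [← dist_eq_norm]
    have hexp : ‖u - v‖^2 = 2 - 2 * ⟪u, v⟫ := by
      rw [norm_sub_sq_real, hun, hvn]; ring
    have huv78 : (7:ℝ)/8 ≤ ⟪u, v⟫ := by nlinarith [norm_nonneg (u - v)]
    rw [hxu, real_inner_smul_left]
    nlinarith
  obtain ⟨z, hzM, hxz⟩ : ∃ z ∈ M, x ∈ closedBall z (r/4) := by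
    have := hMcov hx
    simpa using this
  apply mem_biUnion hzM
  apply mem_biUnion hvV
  exact ⟨mem_closedBall.mp hxz, hx, a, haA, hxa, hinner⟩


/-- Bound for one piece. -/
lemma piece_bound (hd : 0 < d) {A : Set (EuclideanSpace ℝ (Fin d))} {r : ℝ} (hr : 0 < r)
    {v : E} (hv : ‖v‖ = 1) (z : E) :
    μH[(d:ℝ) - 1] (Tset A r z v) ≤
      (3 : ℝ≥0∞) ^ ((d:ℝ) - 1) * (((d : ℝ≥0) ^ ((1:ℝ)/2) : ℝ≥0) : ℝ≥0∞) ^ ((d:ℝ) - 1) *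
        ENNReal.ofReal (r ^ (d - 1)) := by
  have hm : (0:ℝ) ≤ (d:ℝ) - 1 := by
    have : (1:ℝ) ≤ (d:ℝ) := by exact_mod_cast hd
    linarith
  set P : EuclideanSpace ℝ (Fin d) → EuclideanSpace ℝ (Fin d) :=
    fun x => x - ⟪x, v⟫ • v with hP
  have h1 : μH[(d:ℝ)-1] (Tset A r z v) ≤ ((3:ℝ≥0) : ℝ≥0∞) ^ ((d:ℝ)-1) *
      μH[(d:ℝ)-1] (P '' Tset A r z v) := by
    apply graph_bound P _ hm 3
    intro x hx y hy
    have := key_ineq hr hv x hx y hy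
    simpa [hP] using this
  have h2 : P '' Tset A r z v ⊆
      (((ℝ ∙ v)ᗮ : Submodule ℝ (EuclideanSpace ℝ (Fin d))) : Set E) ∩ closedBall (P z) (r/4) := by
    rintro y ⟨x, hx, rfl⟩
    constructor
    · rw [SetLike.mem_coe, Submodule.mem_orthogonal_singleton_iff_inner_right]
      rw [hP]
      simp only
      rw [inner_sub_right, real_inner_smul_right, real_inner_self_eq_norm_sq, hv,
        real_inner_comm]
      ring
    · rw [mem_closedBall, dist_eq_norm]
      have hPd : P x - P z = (x - z) - ⟪x - z, v⟫ • v := by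
        rw [hP]; simp only [inner_sub_left, sub_smul]; abel
      rw [hPd]
      calc ‖(x - z) - ⟪x - z, v⟫ • v‖ ≤ ‖x - z‖ := norm_proj_le v hv _
        _ ≤ r/4 := by rw [← dist_eq_norm]; exact hx.1
  have h3 := hyperplane_bound hd v hv (P z) (by linarith : (0:ℝ) ≤ r/4) h2
  have h4 : (4 * (r/4)) = r := by ring
  rw [h4] at h3
  calc μH[(d:ℝ)-1] (Tset A r z v)
      ≤ ((3:ℝ≥0) : ℝ≥0∞) ^ ((d:ℝ)-1) * μH[(d:ℝ)-1] (P '' Tset A r z v) := h1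
    _ ≤ ((3:ℝ≥0) : ℝ≥0∞) ^ ((d:ℝ)-1) *
        ((((d : ℝ≥0) ^ ((1:ℝ)/2) : ℝ≥0) : ℝ≥0∞) ^ ((d:ℝ) - 1) * ENNReal.ofReal (r ^ (d - 1))) :=
        mul_le_mul_right h3 _
    _ = _ := by
        rw [← mul_assoc]
        norm_num


lemma main_bound (hd : 0 < d) {A : Set (EuclideanSpace ℝ (Fin d))} (hA : IsCompact A)
    (hAne : A.Nonempty) :
    ∃ C : ℝ≥0∞, C ≠ ⊤ ∧ ∀ r : ℝ, 0 < r →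
      ENNReal.ofReal r * μH[(d:ℝ) - 1] {x : E | infDist x A = r} ≤
        C * volume (cthickening r A \ A) := by
  haveI : Nontrivial (EuclideanSpace ℝ (Fin d)) := by
    apply Module.nontrivial_of_finrank_pos (R := ℝ)
    rw [finrank_euclideanSpace_fin]
    exact hd
  obtain ⟨V, hVunit, hVnet⟩ := sphere_net (d := d)
  set c₂ : ℝ≥0∞ :=
    (3 : ℝ≥0∞) ^ ((d:ℝ) - 1) * (((d : ℝ≥0) ^ ((1:ℝ)/2) : ℝ≥0) : ℝ≥0∞) ^ ((d:ℝ) - 1) with hc₂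
  have hm : (0:ℝ) ≤ (d:ℝ) - 1 := by
    have : (1:ℝ) ≤ (d:ℝ) := by exact_mod_cast hd
    linarith
  have hc₂top : c₂ ≠ ⊤ := by
    rw [hc₂]
    apply ENNReal.mul_ne_top
    · exact ENNReal.rpow_ne_top_of_nonneg hm (by norm_num)
    · exact ENNReal.rpow_ne_top_of_nonneg hm ENNReal.coe_ne_top
  set B₁ : ℝ≥0∞ := volume (ball (0:E) 1) with hB₁
  have hB₁pos : B₁ ≠ 0 := (measure_ball_pos volume 0 one_pos).ne'
  have hB₁top : B₁ ≠ ⊤ := measure_ball_lt_top.ne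
  refine ⟨(V.card : ℝ≥0∞) * c₂ * ENNReal.ofReal ((32:ℝ)^d) * B₁⁻¹, ?_, ?_⟩
  · apply ENNReal.mul_ne_top
    apply ENNReal.mul_ne_top
    apply ENNReal.mul_ne_top
    · exact ENNReal.natCast_ne_top _
    · exact hc₂top
    · exact ENNReal.ofReal_ne_top
    · exact ENNReal.inv_ne_top.mpr hB₁pos
  intro r hr
  obtain ⟨M, hMS, hMcov, hMvol⟩ := packing hA hAne hr
  set S : Set E := {x : E | infDist x A = r} with hS
  -- step 1 : measure of S
  have h1 : μH[(d:ℝ)-1] S ≤ (M.card : ℝ≥0∞) * ((V.card : ℝ≥0∞) * (c₂ * ENNReal.ofReal (r ^ (d-1)))) := by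
    calc μH[(d:ℝ)-1] S ≤ μH[(d:ℝ)-1] (⋃ z ∈ M, ⋃ v ∈ V, Tset A r z v) :=
          measure_mono (level_cover hA hAne hr M V hMcov hVunit hVnet)
      _ ≤ ∑ z ∈ M, μH[(d:ℝ)-1] (⋃ v ∈ V, Tset A r z v) := measure_biUnion_finset_le M _
      _ ≤ ∑ z ∈ M, ∑ v ∈ V, μH[(d:ℝ)-1] (Tset A r z v) :=
          Finset.sum_le_sum (fun z _ => measure_biUnion_finset_le V _)
      _ ≤ ∑ z ∈ M, ∑ v ∈ V, (c₂ * ENNReal.ofReal (r ^ (d-1))) := by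
          apply Finset.sum_le_sum
          intro z _
          apply Finset.sum_le_sum
          intro v hv
          rw [hc₂]
          exact piece_bound hd hr (hVunit v hv) z
      _ = (M.card : ℝ≥0∞) * ((V.card : ℝ≥0∞) * (c₂ * ENNReal.ofReal (r ^ (d-1)))) := by
          rw [Finset.sum_const, Finset.sum_const]
          simp [mul_assoc]
  -- volume of small ball
  have hvb : volume (ball (0:E) (r/32)) = ENNReal.ofReal ((r/32)^d) * B₁ := by
    rw [hB₁, Measure.addHaar_ball _ _ (by positivity : (0:ℝ) ≤ r/32), finrank_euclideanSpace_fin]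
  -- assemble
  have hofr : ENNReal.ofReal (r ^ (d-1)) * ENNReal.ofReal r = ENNReal.ofReal (r^d) := by
    rw [← ENNReal.ofReal_mul (by positivity)]
    congr 1
    rw [← pow_succ]
    congr 1
    omega
  have hsplit : ENNReal.ofReal (r^d) = ENNReal.ofReal ((32:ℝ)^d) * ENNReal.ofReal ((r/32)^d) := by
    rw [← ENNReal.ofReal_mul (by positivity)]
    congr 1
    rw [← mul_pow]
    congr 1
    ring
  calc ENNReal.ofReal r * μH[(d:ℝ)-1] S
      ≤ ENNReal.ofReal r * ((M.card : ℝ≥0∞) * ((V.card : ℝ≥0∞) * (c₂ * ENNReal.ofReal (r ^ (d-1))))) :=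
        mul_le_mul_right h1 _
    _ = (V.card : ℝ≥0∞) * c₂ * (ENNReal.ofReal (r ^ (d-1)) * ENNReal.ofReal r) * (M.card : ℝ≥0∞) := by
        ring
    _ = (V.card : ℝ≥0∞) * c₂ * (ENNReal.ofReal ((32:ℝ)^d) * ENNReal.ofReal ((r/32)^d)) * (M.card : ℝ≥0∞) := by
        rw [hofr, hsplit]
    _ = (V.card : ℝ≥0∞) * c₂ * ENNReal.ofReal ((32:ℝ)^d) * B₁⁻¹ *
          ((M.card : ℝ≥0∞) * (ENNReal.ofReal ((r/32)^d) * B₁)) := by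
        have : B₁⁻¹ * B₁ = 1 := ENNReal.inv_mul_cancel hB₁pos hB₁top
        calc (V.card : ℝ≥0∞) * c₂ * (ENNReal.ofReal ((32:ℝ)^d) * ENNReal.ofReal ((r/32)^d)) * (M.card : ℝ≥0∞)
            = (V.card : ℝ≥0∞) * c₂ * ENNReal.ofReal ((32:ℝ)^d) * (B₁⁻¹ * B₁) *
              ((M.card : ℝ≥0∞) * ENNReal.ofReal ((r/32)^d)) := by rw [this]; ring
          _ = _ := by ring
    _ ≤ (V.card : ℝ≥0∞) * c₂ * ENNReal.ofReal ((32:ℝ)^d) * B₁⁻¹ * volume (cthickening r A \ A) := by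
        apply mul_le_mul_right
        rw [← hvb]
        exact hMvol


end Stmt7Aux

open Stmt7Aux in
theorem stmt_7 (d : ℕ) (A : Set (EuclideanSpace ℝ (Fin d))) (hA : IsCompact A) :
    Filter.Tendsto
      (fun r : ℝ => ENNReal.ofReal r * μH[(d : ℝ) - 1] (frontier (Metric.cthickening r A)))
      (𝓝[>] 0) (𝓝 0) := by
  rcases Nat.eq_zero_or_pos d with rfl | hd
  · -- dimension 0 : the space is a subsingleton, every frontier is empty
    haveI : Subsingleton (EuclideanSpace ℝ (Fin 0)) := by
      constructor
      intro a b
      ext i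
      exact absurd i.2 (by omega)
    have hfr : ∀ r : ℝ, frontier (Metric.cthickening r A) = ∅ := by
      intro r
      rcases (Metric.cthickening r A).eq_empty_or_nonempty with h | ⟨x, hx⟩
      · rw [h, frontier_empty]
      · have : Metric.cthickening r A = univ := by
          apply eq_univ_of_forall
          intro y
          rwa [Subsingleton.elim y x]
        rw [this, frontier_univ]
    simp only [hfr, measure_empty, mul_zero]
    exact tendsto_const_nhds
  rcases A.eq_empty_or_nonempty with rfl | hAne
  · simp only [Metric.cthickening_empty, frontier_empty, measure_empty, mul_zero]
    exact tendsto_const_nhds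
  obtain ⟨C, hCtop, hC⟩ := main_bound hd hA hAne
  -- the diff volumes tend to zero
  have hW : Tendsto (fun r : ℝ => volume (Metric.cthickening r A \ A)) (𝓝[>] 0) (𝓝 0) := by
    have h0 : Tendsto (fun r : ℝ => volume (Metric.cthickening r A)) (𝓝 0) (𝓝 (volume A)) :=
      tendsto_measure_cthickening_of_isCompact hA
    have h0' : Tendsto (fun r : ℝ => volume (Metric.cthickening r A)) (𝓝[>] 0) (𝓝 (volume A)) :=
      h0.mono_left nhdsWithin_le_nhds
    have hsub : Tendsto (fun r : ℝ => volume (Metric.cthickening r A) - volume A) (𝓝[>] 0)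
        (𝓝 (volume A - volume A)) :=
      ENNReal.Tendsto.sub h0' tendsto_const_nhds (Or.inr hA.measure_lt_top.ne)
    rw [tsub_self] at hsub
    apply hsub.congr'
    filter_upwards [self_mem_nhdsWithin] with r hr
    rw [measure_diff (Metric.self_subset_cthickening A) hA.measurableSet.nullMeasurableSet
      hA.measure_lt_top.ne]
  -- squeeze
  apply tendsto_of_tendsto_of_tendsto_of_le_of_le' (g := fun _ => (0:ℝ≥0∞))
    (h := fun r => C * volume (Metric.cthickening r A \ A)) tendsto_const_nhds
  · have := ENNReal.Tendsto.const_mul hW (Or.inr hCtop)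
    rwa [mul_zero] at this
  · filter_upwards with r
    exact zero_le
  · filter_upwards [self_mem_nhdsWithin] with r hr
    have hr' : (0:ℝ) < r := hr
    have hfsub : frontier (Metric.cthickening r A) ⊆
        {x : EuclideanSpace ℝ (Fin d) | infDist x A = r} := by
      intro x hx
      have h1 := Metric.frontier_cthickening_subset A (δ := r) hx
      have h2 : Metric.infEDist x A = ENNReal.ofReal r := h1
      have : infDist x A = (ENNReal.ofReal r).toReal := by
        rw [Metric.infDist, h2]
      rwa [ENNReal.toReal_ofReal hr'.le] at this
    calc ENNReal.ofReal r * μH[(d:ℝ)-1] (frontier (Metric.cthickening r A))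
        ≤ ENNReal.ofReal r * μH[(d:ℝ)-1] {x : EuclideanSpace ℝ (Fin d) | infDist x A = r} :=
          mul_le_mul_right (measure_mono hfsub) _
      _ ≤ C * volume (Metric.cthickening r A \ A) := hC r hr'
end

section
/- Let A ⊂ ℝ^d be compact and 0 < r₀ < r. Then the left derivative of the parallel volume satisfies (V_A)'_−(r) ≤ (r/r₀)^{d−1} (V_A)'_−(r₀). -/
open MeasureTheory Metric Filter Set Module Function
open scoped Topology ENNReal NNReal RealInnerProductSpace

section geom
variable {E : Type*} [NormedAddCommGroup E] [InnerProductSpace ℝ E]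

lemma expand_key {p q x y : E} (hpq : ⟪p - q, x - y⟫ ≥ 0) {c : ℝ} (hc0 : 0 ≤ c) (hc1 : c ≤ 1) :
    c * ‖x - y‖ ≤ ‖(p + c • (x - p)) - (q + c • (y - q))‖ := by
  set u := p - q
  set v := x - y
  have hw : (p + c • (x - p)) - (q + c • (y - q)) = (1 - c) • u + c • v := by
    simp only [u, v, smul_sub, sub_smul, one_smul]
    abel
  rw [hw]
  have h2 : ‖(1 - c) • u + c • v‖ ^ 2 = (1-c)^2 * ‖u‖^2 + 2 * ((1-c)*c) * ⟪u, v⟫ + c^2 * ‖v‖^2 := by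
    rw [@norm_add_sq_real]
    rw [real_inner_smul_left, real_inner_smul_right]
    simp [norm_smul, abs_of_nonneg, hc0, sub_nonneg.2 hc1, mul_pow]
    ring
  nlinarith [norm_nonneg ((1 - c) • u + c • v), norm_nonneg v, norm_nonneg u,
    sq_nonneg ((1-c) * ‖u‖), mul_nonneg (mul_nonneg (sub_nonneg.2 hc1) hc0) hpq]

-- monotonicity of nearest points
lemma proj_mono {p q x y : E} (h1 : dist x p ≤ dist x q) (h2 : dist y q ≤ dist y p) :
    ⟪p - q, x - y⟫ ≥ 0 := by
  have e1 : ‖x - p‖ ^ 2 ≤ ‖x - q‖ ^ 2 := by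
    rw [← dist_eq_norm, ← dist_eq_norm]; exact pow_le_pow_left₀ dist_nonneg h1 2
  have e2 : ‖y - q‖ ^ 2 ≤ ‖y - p‖ ^ 2 := by
    rw [← dist_eq_norm, ← dist_eq_norm]; exact pow_le_pow_left₀ dist_nonneg h2 2
  have f1 : ‖x - p‖ ^ 2 = ‖x‖^2 - 2 * ⟪x, p⟫ + ‖p‖^2 := norm_sub_sq_real x p
  have f2 : ‖x - q‖ ^ 2 = ‖x‖^2 - 2 * ⟪x, q⟫ + ‖q‖^2 := norm_sub_sq_real x q
  have f3 : ‖y - q‖ ^ 2 = ‖y‖^2 - 2 * ⟪y, q⟫ + ‖q‖^2 := norm_sub_sq_real y q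
  have f4 : ‖y - p‖ ^ 2 = ‖y‖^2 - 2 * ⟪y, p⟫ + ‖p‖^2 := norm_sub_sq_real y p
  have g : ⟪p - q, x - y⟫ = (⟪x, p⟫ - ⟪x, q⟫) - (⟪y, p⟫ - ⟪y, q⟫) := by
    rw [inner_sub_left, inner_sub_right, inner_sub_right]
    rw [real_inner_comm p x, real_inner_comm q x, real_inner_comm p y, real_inner_comm q y]
    ring
  linarith

end geom

section kneser
variable {d : ℕ}

lemma mem_cth_iff {A : Set (EuclideanSpace ℝ (Fin d))} (hne : A.Nonempty) {δ : ℝ}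
    (hδ : 0 ≤ δ) {x : EuclideanSpace ℝ (Fin d)} :
    x ∈ cthickening δ A ↔ infDist x A ≤ δ := by
  rw [mem_cthickening_iff]
  exact ENNReal.le_ofReal_iff_toReal_le (infEdist_ne_top hne) hδ

lemma vol_image_le {K : ℝ≥0} {f : EuclideanSpace ℝ (Fin d) → EuclideanSpace ℝ (Fin d)}
    {s : Set (EuclideanSpace ℝ (Fin d))} (h : LipschitzOnWith K f s) :
    volume (f '' s) ≤ (K : ℝ≥0∞) ^ (d : ℝ) * volume s := by
  have hfr : ((finrank ℝ (EuclideanSpace ℝ (Fin d)) : ℕ) : ℝ) = (d : ℝ) := by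
    simp [finrank_euclideanSpace_fin]
  have hH : (μH[(d : ℝ)] : Measure (EuclideanSpace ℝ (Fin d))).IsAddHaarMeasure := by
    rw [← hfr]; infer_instance
  have hvol : (volume : Measure (EuclideanSpace ℝ (Fin d)))
      = Measure.addHaarScalarFactor (volume : Measure (EuclideanSpace ℝ (Fin d)))
          μH[(d : ℝ)] • μH[(d : ℝ)] :=
    Measure.isAddLeftInvariant_eq_smul _ _
  set c := Measure.addHaarScalarFactor (volume : Measure (EuclideanSpace ℝ (Fin d))) μH[(d : ℝ)]
  calc volume (f '' s) = (c : ℝ≥0∞) * μH[(d : ℝ)] (f '' s) := by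
        rw [hvol, Measure.smul_apply, ENNReal.smul_def, smul_eq_mul]
    _ ≤ (c : ℝ≥0∞) * ((K : ℝ≥0∞) ^ (d : ℝ) * μH[(d : ℝ)] s) := by
        gcongr; exact h.hausdorffMeasure_image_le (by positivity)
    _ = (K : ℝ≥0∞) ^ (d : ℝ) * ((c : ℝ≥0∞) * μH[(d : ℝ)] s) := by ring
    _ = (K : ℝ≥0∞) ^ (d : ℝ) * volume s := by rw [hvol, Measure.smul_apply, ENNReal.smul_def, smul_eq_mul]

lemma kneser_vol {A : Set (EuclideanSpace ℝ (Fin d))} (hA : IsCompact A) (hne : A.Nonempty)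
    {a b l : ℝ} (ha : 0 ≤ a) (hl : 1 ≤ l) :
    volume (cthickening (l * b) A \ cthickening (l * a) A)
      ≤ ENNReal.ofReal (l ^ d) * volume (cthickening b A \ cthickening a A) := by
  have hl0 : 0 < l := lt_of_lt_of_le one_pos hl
  have hc0 : 0 ≤ l⁻¹ := by positivity
  have hc1 : l⁻¹ ≤ 1 := by
    rw [inv_le_one_iff₀]; right; exact hl
  -- nearest point projection
  choose p hpA hpd using fun x => hA.exists_infDist_eq_dist hne x
  set Φ : EuclideanSpace ℝ (Fin d) → EuclideanSpace ℝ (Fin d) :=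
    fun x => p x + l⁻¹ • (x - p x) with hΦ
  -- the expansion property
  have key : ∀ x y, l⁻¹ * dist x y ≤ dist (Φ x) (Φ y) := by
    intro x y
    have hpq : ⟪p x - p y, x - y⟫ ≥ 0 := by
      apply proj_mono
      · rw [← hpd x]; exact infDist_le_dist_of_mem (hpA y)
      · rw [← hpd y]; exact infDist_le_dist_of_mem (hpA x)
    have := expand_key hpq hc0 hc1
    rw [dist_eq_norm, dist_eq_norm]
    exact this
  have hinj : Function.Injective Φ := by
    intro x y hxy
    have := key x y
    rw [hxy, dist_self] at this
    have : dist x y ≤ 0 := by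
      nlinarith [dist_nonneg (x := x) (y := y), inv_pos.2 hl0]
    exact dist_le_zero.1 this
  -- distance scaling
  have hΦdist : ∀ x, infDist (Φ x) A = l⁻¹ * infDist x A := by
    intro x
    apply le_antisymm
    · calc infDist (Φ x) A ≤ dist (Φ x) (p x) := infDist_le_dist_of_mem (hpA x)
        _ = l⁻¹ * dist x (p x) := by
            rw [dist_eq_norm, dist_eq_norm]
            simp only [hΦ]
            rw [show p x + l⁻¹ • (x - p x) - p x = l⁻¹ • (x - p x) by abel]
            rw [norm_smul, Real.norm_eq_abs, abs_of_nonneg hc0]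
        _ = l⁻¹ * infDist x A := by rw [← hpd x]
    · have h1 : infDist x A ≤ infDist (Φ x) A + dist x (Φ x) := infDist_le_infDist_add_dist
      have h2 : dist x (Φ x) = (1 - l⁻¹) * infDist x A := by
        rw [dist_eq_norm]
        simp only [hΦ]
        rw [show x - (p x + l⁻¹ • (x - p x)) = (1 - l⁻¹) • (x - p x) by
          rw [sub_smul, one_smul]; abel]
        rw [norm_smul, Real.norm_eq_abs, abs_of_nonneg (by linarith : (0:ℝ) ≤ 1 - l⁻¹)]
        rw [hpd x, dist_eq_norm]
      linarith [h1, h2]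
  set S := cthickening (l * b) A \ cthickening (l * a) A with hS
  set T := cthickening b A \ cthickening a A with hT
  by_cases hab : a ≤ b
  case neg =>
    -- then b < a, S = ∅? no... l*b < l*a so cthickening (l*b) ⊆ cthickening (l*a), S = ∅
    have : S = ∅ := by
      rw [hS, diff_eq_empty]
      exact cthickening_mono (by nlinarith) A
    simp [this]
  have hb : 0 ≤ b := le_trans ha hab
  -- Φ maps S into T
  have hmaps : MapsTo Φ S T := by
    intro x hx
    obtain ⟨hx1, hx2⟩ := hx
    have hd1 : infDist x A ≤ l * b := (mem_cth_iff hne (by positivity)).1 hx1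
    have hd2 : ¬ infDist x A ≤ l * a := fun h => hx2 ((mem_cth_iff hne (by positivity)).2 h)
    push_neg at hd2
    constructor
    · rw [mem_cth_iff hne hb, hΦdist]
      calc l⁻¹ * infDist x A ≤ l⁻¹ * (l * b) := by
            apply mul_le_mul_of_nonneg_left hd1 hc0
        _ = b := by field_simp
    · intro hmem
      have := (mem_cth_iff hne ha).1 hmem
      rw [hΦdist] at this
      have : infDist x A ≤ l * a := by
        calc infDist x A = l * (l⁻¹ * infDist x A) := by field_simp
          _ ≤ l * a := by apply mul_le_mul_of_nonneg_left this (le_of_lt hl0)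
      linarith
  -- inverse is Lipschitz on the image
  have hinjS : InjOn Φ S := hinj.injOn
  have hli : ∀ x ∈ S, invFunOn Φ S (Φ x) = x := fun x hx => hinjS.leftInvOn_invFunOn hx
  have hlip : LipschitzOnWith l.toNNReal (invFunOn Φ S) (Φ '' S) := by
    rw [lipschitzOnWith_iff_dist_le_mul]
    rintro u ⟨x, hx, rfl⟩ v ⟨y, hy, rfl⟩
    rw [hli x hx, hli y hy]
    have := key x y
    rw [Real.coe_toNNReal _ (le_of_lt hl0)]
    calc dist x y = l * (l⁻¹ * dist x y) := by field_simp
      _ ≤ l * dist (Φ x) (Φ y) := by apply mul_le_mul_of_nonneg_left this (le_of_lt hl0)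
  have himg : invFunOn Φ S '' (Φ '' S) = S := by
    rw [image_image]
    apply Set.eq_of_subset_of_subset
    · rintro _ ⟨x, hx, rfl⟩
      show invFunOn Φ S (Φ x) ∈ S
      rw [hli x hx]; exact hx
    · intro x hx
      exact ⟨x, hx, hli x hx⟩
  calc volume S = volume (invFunOn Φ S '' (Φ '' S)) := by rw [himg]
    _ ≤ (l.toNNReal : ℝ≥0∞) ^ (d : ℝ) * volume (Φ '' S) := vol_image_le hlip
    _ ≤ (l.toNNReal : ℝ≥0∞) ^ (d : ℝ) * volume T := by
        gcongr
        exact hmaps.image_subset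
    _ = ENNReal.ofReal (l ^ d) * volume T := by
        congr 1
        rw [ENNReal.rpow_natCast, ENNReal.ofReal, Real.toNNReal_pow (le_of_lt hl0),
          ENNReal.coe_pow]

end kneser

lemma kneser_real {d : ℕ} {A : Set (EuclideanSpace ℝ (Fin d))} (hA : IsCompact A) (hne : A.Nonempty)
    {a b l : ℝ} (ha : 0 ≤ a) (hab : a ≤ b) (hl : 1 ≤ l) :
    (volume (cthickening (l * b) A)).toReal - (volume (cthickening (l * a) A)).toReal
      ≤ l ^ d * ((volume (cthickening b A)).toReal - (volume (cthickening a A)).toReal) := by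
  have hl0 : (0:ℝ) < l := lt_of_lt_of_le one_pos hl
  have fin : ∀ s : ℝ, volume (cthickening s A) ≠ ⊤ := fun s =>
    hA.cthickening.measure_lt_top.ne
  have hsub1 : cthickening (l * a) A ⊆ cthickening (l * b) A :=
    cthickening_mono (by nlinarith) A
  have hsub2 : cthickening a A ⊆ cthickening b A := cthickening_mono hab A
  have hd1 : volume (cthickening (l * b) A \ cthickening (l * a) A)
      = volume (cthickening (l * b) A) - volume (cthickening (l * a) A) :=
    measure_diff hsub1 isClosed_cthickening.measurableSet.nullMeasurableSet (fin _)
  have hd2 : volume (cthickening b A \ cthickening a A)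
      = volume (cthickening b A) - volume (cthickening a A) :=
    measure_diff hsub2 isClosed_cthickening.measurableSet.nullMeasurableSet (fin _)
  have h := kneser_vol hA hne (b := b) ha hl
  rw [hd1, hd2] at h
  have hRfin : ENNReal.ofReal (l ^ d) * (volume (cthickening b A) - volume (cthickening a A))
      ≠ ⊤ := by
    apply ENNReal.mul_ne_top ENNReal.ofReal_ne_top
    exact (tsub_le_self.trans_lt (hA.cthickening.measure_lt_top)).ne
  have := ENNReal.toReal_mono hRfin h
  rw [ENNReal.toReal_mul, ENNReal.toReal_ofReal (by positivity),
    ENNReal.toReal_sub_of_le (measure_mono hsub1) (fin _),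
    ENNReal.toReal_sub_of_le (measure_mono hsub2) (fin _)] at this
  exact this


theorem stmt_11 (d : ℕ) (A : Set (EuclideanSpace ℝ (Fin d))) (hA : IsCompact A)
    (r₀ r : ℝ) (h₀ : 0 < r₀) (h₀r : r₀ < r) (L L₀ : ℝ)
    (hL : HasDerivWithinAt (fun s : ℝ => (volume (Metric.cthickening s A)).toReal)
      L (Set.Iio r) r)
    (hL₀ : HasDerivWithinAt (fun s : ℝ => (volume (Metric.cthickening s A)).toReal)
      L₀ (Set.Iio r₀) r₀) :
    L ≤ (r / r₀) ^ ((d : ℝ) - 1) * L₀ := by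
  set V : ℝ → ℝ := fun s => (volume (Metric.cthickening s A)).toReal with hV
  rcases A.eq_empty_or_nonempty with rfl | hne
  · -- empty case: V ≡ 0, so L = L₀ = 0
    have hV0 : V = fun _ : ℝ => (0:ℝ) := by
      funext s; simp [hV, cthickening_empty]
    have hL' : HasDerivWithinAt V (0:ℝ) (Iio r) r := by
      rw [hV0]; exact hasDerivWithinAt_const r _ 0
    have hL0' : HasDerivWithinAt V (0:ℝ) (Iio r₀) r₀ := by
      rw [hV0]; exact hasDerivWithinAt_const r₀ _ 0
    have hLe : L = 0 := (uniqueDiffWithinAt_Iio r).eq_deriv _ hL hL'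
    have hL0e : L₀ = 0 := (uniqueDiffWithinAt_Iio r₀).eq_deriv _ hL₀ hL0'
    rw [hLe, hL0e]; simp
  · have hr : (0:ℝ) < r := h₀.trans h₀r
    set l : ℝ := r / r₀ with hldef
    have hl1 : 1 < l := (one_lt_div h₀).2 h₀r
    have hl0 : (0:ℝ) < l := one_pos.trans hl1
    -- the slope inequality
    have hslope : ∀ s : ℝ, 0 ≤ s → s < r →
        slope V r s ≤ l ^ ((d:ℝ) - 1) * slope V r₀ (s * (r₀ / r)) := by
      intro s hs0 hsr
      set a : ℝ := s * (r₀ / r) with hadef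
      have ha0 : 0 ≤ a := by positivity
      have har : a < r₀ := by
        rw [hadef]
        calc s * (r₀ / r) < r * (r₀ / r) := by
              apply mul_lt_mul_of_pos_right hsr (by positivity)
          _ = r₀ := by field_simp
      have hla : l * a = s := by rw [hldef, hadef]; field_simp
      have hlb : l * r₀ = r := by rw [hldef]; field_simp
      have hK := kneser_real hA hne (a := a) (b := r₀) (l := l) ha0 har.le hl1.le
      rw [hla, hlb] at hK
      -- slope V r s = (V r - V s)/(r - s), r - s = l * (r₀ - a)
      have hrs : r - s = l * (r₀ - a) := by rw [mul_sub, hla, hlb]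
      have hrspos : 0 < r - s := by linarith
      have hr0a : 0 < r₀ - a := by linarith
      have e1 : slope V r s = (V r - V s) / (r - s) := by
        rw [slope_def_field]
        rw [div_eq_div_iff (by linarith : s - r ≠ 0) (by linarith : r - s ≠ 0)]
        ring
      have e2 : slope V r₀ a = (V r₀ - V a) / (r₀ - a) := by
        rw [slope_def_field]
        rw [div_eq_div_iff (by linarith : a - r₀ ≠ 0) (by linarith : r₀ - a ≠ 0)]
        ring
      rw [e1, e2]
      have hlpow : l ^ ((d:ℝ) - 1) = l ^ d / l := by
        rw [Real.rpow_sub hl0, Real.rpow_one, Real.rpow_natCast]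
      rw [hlpow, hrs]
      have erhs : l ^ d / l * ((V r₀ - V a) / (r₀ - a))
          = (l ^ d * (V r₀ - V a)) / (l * (r₀ - a)) := by
        field_simp
      rw [erhs]
      exact div_le_div_of_nonneg_right hK (by positivity)
    -- limits
    have hT1 : Tendsto (slope V r) (𝓝[<] r) (𝓝 L) := by
      have := hasDerivWithinAt_iff_tendsto_slope.1 hL
      rwa [show Iio r \ {r} = Iio r from diff_singleton_eq_self (fun h => lt_irrefl r h)] at this
    have hT0 : Tendsto (slope V r₀) (𝓝[<] r₀) (𝓝 L₀) := by
      have := hasDerivWithinAt_iff_tendsto_slope.1 hL₀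
      rwa [show Iio r₀ \ {r₀} = Iio r₀ from diff_singleton_eq_self (fun h => lt_irrefl r₀ h)]
        at this
    have hmap : Tendsto (fun s : ℝ => s * (r₀ / r)) (𝓝[<] r) (𝓝[<] r₀) := by
      apply tendsto_nhdsWithin_of_tendsto_nhds_of_eventually_within
      · have : Tendsto (fun s : ℝ => s * (r₀ / r)) (𝓝 r) (𝓝 (r * (r₀ / r))) :=
          (continuous_id.mul continuous_const).tendsto r
        rw [show r * (r₀ / r) = r₀ by field_simp] at this
        exact this.mono_left nhdsWithin_le_nhds
      · filter_upwards [self_mem_nhdsWithin] with s hs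
        have : s * (r₀ / r) < r * (r₀ / r) :=
          mul_lt_mul_of_pos_right hs (by positivity)
        rw [show r * (r₀ / r) = r₀ by field_simp] at this
        exact this
    have hT2 : Tendsto (fun s : ℝ => l ^ ((d:ℝ) - 1) * slope V r₀ (s * (r₀ / r))) (𝓝[<] r)
        (𝓝 (l ^ ((d:ℝ) - 1) * L₀)) :=
      tendsto_const_nhds.mul (hT0.comp hmap)
    apply le_of_tendsto_of_tendsto hT1 hT2
    filter_upwards [Ioo_mem_nhdsLT_of_mem (by constructor <;> linarith : r ∈ Ioc (0:ℝ) r)]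
      with s hs
    exact hslope s hs.1.le hs.2
end

section
/- Let Z be a random compact planar set such that |log r| · H²(Z_r) → π almost surely as r → 0 (as holds for the Brownian path on [0,1] in ℝ²). Then almost surely limsup_{r→0} r |log r| H¹(∂Z_r) ≤ 2π. -/
open MeasureTheory Metric Filter Set TopologicalSpace
open scoped Topology ENNReal NNReal RealInnerProductSpace

namespace Stmt18Aux

set_option maxHeartbeats 2000000

noncomputable section

local notation "E" => EuclideanSpace ℝ (Fin 2)





lemma norm_sq_coords (x : E) : ‖x‖^2 = x 0 ^2 + x 1 ^2 := by
  rw [EuclideanSpace.norm_eq, Real.sq_sqrt (by positivity)]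
  simp [Fin.sum_univ_two, sq_abs]

lemma inner_coords (x y : E) : ⟪x, y⟫ = x 0 * y 0 + x 1 * y 1 := by
  simp [PiLp.inner_apply, RCLike.inner_apply, Fin.sum_univ_two]
  ring

def vec (t : ℝ) : E := (WithLp.equiv 2 (Fin 2 → ℝ)).symm ![Real.cos t, Real.sin t]
def pvec (t : ℝ) : E := (WithLp.equiv 2 (Fin 2 → ℝ)).symm ![-Real.sin t, Real.cos t]

@[simp] lemma vec_zero (t : ℝ) : vec t 0 = Real.cos t := rfl
@[simp] lemma vec_one (t : ℝ) : vec t 1 = Real.sin t := rfl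
@[simp] lemma pvec_zero (t : ℝ) : pvec t 0 = -Real.sin t := rfl
@[simp] lemma pvec_one (t : ℝ) : pvec t 1 = Real.cos t := rfl

lemma norm_vec (t : ℝ) : ‖vec t‖ = 1 := by
  have h2 : ‖vec t‖^2 = 1 := by
    rw [norm_sq_coords]
    simp only [vec_zero, vec_one]
    nlinarith [Real.sin_sq_add_cos_sq t]
  nlinarith [norm_nonneg (vec t)]

lemma norm_pvec (t : ℝ) : ‖pvec t‖ = 1 := by
  have h2 : ‖pvec t‖^2 = 1 := by
    rw [norm_sq_coords]
    simp only [pvec_zero, pvec_one]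
    nlinarith [Real.sin_sq_add_cos_sq t]
  nlinarith [norm_nonneg (pvec t)]

lemma pythagoras (t : ℝ) (v : E) :
    ⟪v, vec t⟫^2 + ⟪v, pvec t⟫^2 = ‖v‖^2 := by
  rw [inner_coords, inner_coords, norm_sq_coords]
  simp only [vec_zero, vec_one, pvec_zero, pvec_one]
  nlinarith [Real.sin_sq_add_cos_sq t]

lemma inner_vec (u : E) (t : ℝ) : ⟪u, vec t⟫ = u 0 * Real.cos t + u 1 * Real.sin t := by
  rw [inner_coords]; simp

/-- every unit vector is within 1/20 of some `vec (j/10)`, `j < 63`. -/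
lemma sector_cover (u : E) (hu : ‖u‖ = 1) :
    ∃ j : Fin 63, ‖u - vec ((j : ℝ)/10)‖ ≤ 1/20 := by
  have hsq : u 0 ^2 + u 1 ^2 = 1 := by rw [← norm_sq_coords, hu]; norm_num
  set a := u 0 with ha
  set b := u 1 with hb
  have ha1 : -1 ≤ a := by nlinarith
  have ha2 : a ≤ 1 := by nlinarith
  set φ : ℝ := if 0 ≤ b then Real.arccos a else 2 * Real.pi - Real.arccos a with hφ
  have harc1 : 0 ≤ Real.arccos a := Real.arccos_nonneg a
  have harc2 : Real.arccos a ≤ Real.pi := Real.arccos_le_pi a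
  have hπ : Real.pi ≤ 3.15 := by linarith [Real.pi_lt_d2]
  have hπ2 : 3.14 ≤ Real.pi := by linarith [Real.pi_gt_d2]
  have hφ0 : 0 ≤ φ := by
    rw [hφ]; split_ifs; · exact harc1
    · linarith
  have hφ2 : φ ≤ 2 * Real.pi := by
    rw [hφ]; split_ifs; · linarith
    · linarith
  have hcos : Real.cos φ = a := by
    rw [hφ]; split_ifs
    · exact Real.cos_arccos ha1 ha2
    · rw [Real.cos_two_pi_sub]; exact Real.cos_arccos ha1 ha2
  have hsin : Real.sin φ = b := by
    have hs : Real.sin (Real.arccos a) = Real.sqrt (1 - a^2) := Real.sin_arccos a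
    have h1a : 1 - a^2 = b^2 := by nlinarith
    rw [hφ]; split_ifs with hbs
    · rw [hs, h1a, Real.sqrt_sq_eq_abs, abs_of_nonneg hbs]
    · rw [Real.sin_two_pi_sub, hs, h1a, Real.sqrt_sq_eq_abs, abs_of_neg (not_le.1 hbs)]
      ring
  have key : ∀ ψ : ℝ, ‖u - vec ψ‖^2 = 2 - 2 * Real.cos (φ - ψ) := by
    intro ψ
    rw [norm_sub_sq_real, hu, norm_vec, inner_vec, ← ha, ← hb, ← hcos, ← hsin,
      Real.cos_sub]
    ring
  by_cases hcase : φ < 6.25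
  · set j' : ℤ := ⌊10 * φ + 1/2⌋ with hj'
    have hj0 : 0 ≤ j' := by
      apply Int.le_floor.2; push_cast; linarith
    have hj62 : j' ≤ 62 := by
      have h1 : (j' : ℝ) ≤ 10 * φ + 1/2 := Int.floor_le _
      by_contra hgt
      push_neg at hgt
      have : (63 : ℝ) ≤ (j' : ℝ) := by exact_mod_cast hgt
      linarith
    have hdist : |10 * φ - (j' : ℝ)| ≤ 1/2 := by
      have h1 : (j' : ℝ) ≤ 10 * φ + 1/2 := Int.floor_le _
      have h2 : 10 * φ + 1/2 < (j' : ℝ) + 1 := Int.lt_floor_add_one _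
      rw [abs_le]; constructor <;> linarith
    refine ⟨⟨j'.toNat, by omega⟩, ?_⟩
    have hcast : ((⟨j'.toNat, by omega⟩ : Fin 63) : ℝ) = (j' : ℝ) := by
      have h := Int.toNat_of_nonneg hj0
      exact_mod_cast congrArg (Int.cast : ℤ → ℝ) h
    rw [hcast]
    have hk := key ((j' : ℝ)/10)
    have hcb : 1 - (φ - (j':ℝ)/10)^2/2 ≤ Real.cos (φ - (j':ℝ)/10) :=
      Real.one_sub_sq_div_two_le_cos
    have hsmall : (φ - (j':ℝ)/10)^2 ≤ 1/400 := by
      have habs : |φ - (j':ℝ)/10| ≤ 1/20 := by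
        rw [abs_le] at hdist ⊢; constructor <;> [linarith; linarith]
      nlinarith [abs_nonneg (φ - (j':ℝ)/10), sq_abs (φ - (j':ℝ)/10)]
    have hfin : ‖u - vec ((j':ℝ)/10)‖^2 ≤ 1/400 := by rw [hk]; nlinarith
    nlinarith [norm_nonneg (u - vec ((j':ℝ)/10))]
  · refine ⟨0, ?_⟩
    push_neg at hcase
    have hc0 : (((0 : Fin 63)) : ℝ)/10 = 0 := by simp
    rw [hc0]; clear hc0
    have h2π : φ - 2 * Real.pi ≤ 0 := by linarith
    have hge : -(1/20) ≤ φ - 2 * Real.pi := by linarith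
    have hcosper : Real.cos φ = Real.cos (φ - 2 * Real.pi) := (Real.cos_sub_two_pi φ).symm
    have hcb : 1 - (φ - 2*Real.pi)^2/2 ≤ Real.cos (φ - 2*Real.pi) :=
      Real.one_sub_sq_div_two_le_cos
    have hsmall : (φ - 2*Real.pi)^2 ≤ 1/400 := by nlinarith
    have hfin : ‖u - vec 0‖^2 ≤ 1/400 := by
      have hk := key 0
      rw [sub_zero] at hk
      rw [hk, hcosper]
      nlinarith
    nlinarith [norm_nonneg (u - vec 0)]






variable {Z : Set E} {r : ℝ} {x y : E}

lemma infDist_of_frontier (hZn : Z.Nonempty) (hr : 0 ≤ r)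
    (hx : x ∈ frontier (cthickening r Z)) :
    infDist x Z = r := by
  have hle : infDist x Z ≤ r := by
    have h1 : x ∈ cthickening r Z := isClosed_cthickening.frontier_subset hx
    rw [mem_cthickening_iff] at h1
    have h2 := ENNReal.toReal_mono ENNReal.ofReal_ne_top h1
    rwa [ENNReal.toReal_ofReal hr] at h2
  have hge : r ≤ infDist x Z := by
    by_contra hlt
    push_neg at hlt
    have hmem : x ∈ thickening r Z := (mem_thickening_iff_infDist_lt hZn).2 hlt
    have hint : thickening r Z ⊆ interior (cthickening r Z) :=
      isOpen_thickening.subset_interior_iff.2 (thickening_subset_cthickening r Z)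
    exact hx.2 (hint hmem)
  linarith

lemma exists_dir (hZc : IsCompact Z) (hZn : Z.Nonempty) (hr : 0 < r)
    (hx : x ∈ frontier (cthickening r Z)) :
    ∃ u : E, ‖u‖ = 1 ∧
      ∀ t p, 0 < t → t ≤ r → dist p (x - t • u) ≤ t/2 → infDist p Z ≤ r - t/2 := by
  obtain ⟨z, hz, hdz⟩ := hZc.exists_infDist_eq_dist hZn x
  have hdxz : dist x z = r := by rw [← hdz, infDist_of_frontier hZn hr.le hx]
  refine ⟨r⁻¹ • (x - z), ?_, ?_⟩
  · rw [norm_smul, norm_inv, Real.norm_eq_abs, abs_of_pos hr, ← dist_eq_norm, hdxz]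
    field_simp
  · intro t p ht htr hp
    have hxz : x - z = r • (r⁻¹ • (x - z)) := by
      rw [smul_smul, mul_inv_cancel₀ hr.ne', one_smul]
    have hd2 : dist (x - t • (r⁻¹ • (x - z))) z = r - t := by
      rw [dist_eq_norm]
      have : x - t • (r⁻¹ • (x - z)) - z = (1 - t/r) • (x - z) := by
        rw [sub_smul, one_smul, smul_smul]
        field_simp
        abel
      rw [this, norm_smul, Real.norm_eq_abs, ← dist_eq_norm, hdxz,
        abs_of_nonneg (by rw [sub_nonneg]; exact div_le_one_of_le₀ htr hr.le)]
      field_simp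
    calc infDist p Z ≤ dist p z := infDist_le_dist_of_mem hz
      _ ≤ dist p (x - t • (r⁻¹ • (x - z))) + dist (x - t • (r⁻¹ • (x - z))) z :=
          dist_triangle _ _ _
      _ ≤ t/2 + (r - t) := by rw [hd2]; exact add_le_add_left hp _
      _ = r - t/2 := by ring

lemma pair_inner (hZc : IsCompact Z) (hZn : Z.Nonempty) (hr : 0 < r)
    (hx : x ∈ frontier (cthickening r Z)) (hy : y ∈ frontier (cthickening r Z))
    {u : E} (hu : ‖u‖ = 1)
    (hcone : ∀ t p, 0 < t → t ≤ r → dist p (x - t • u) ≤ t/2 → infDist p Z ≤ r - t/2)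
    (hne : y ≠ x) (hclose : ‖y - x‖ ≤ r) :
    -(9/10) * ‖y - x‖ < ⟪y - x, u⟫ := by
  by_contra hcontra
  push_neg at hcontra
  set v := y - x with hv
  set n := ‖v‖ with hn
  have hn0 : 0 < n := by
    rw [hn, hv, norm_pos_iff]
    exact sub_ne_zero_of_ne hne
  set t := (9/10) * n with htdef
  have ht0 : 0 < t := by positivity
  have htr : t ≤ r := by nlinarith
  have hdist : dist y (x - t • u) ≤ t/2 := by
    rw [dist_eq_norm]
    have hexp : y - (x - t • u) = v + t • u := by rw [hv]; abel
    rw [hexp]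
    have hsq : ‖v + t • u‖^2 ≤ (t/2)^2 := by
      rw [norm_add_sq_real, real_inner_smul_right, norm_smul, Real.norm_eq_abs,
        abs_of_pos ht0, hu]
      have hinner : ⟪v, u⟫ ≤ -(9/10) * n := hcontra
      nlinarith
    nlinarith [norm_nonneg (v + t • u)]
  have hbound := hcone t y ht0 htr hdist
  have hyeq : infDist y Z = r := infDist_of_frontier hZn hr.le hy
  rw [hyeq] at hbound
  linarith






/-- lower bound for the 2-dimensional Hausdorff measure of a euclidean ball -/
lemma hausdorff_ball_lower (x : E) {ρ : ℝ} (hρ : 0 ≤ ρ) :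
    ENNReal.ofReal (ρ^2) ≤ μH[(2:ℝ)] (closedBall x ρ) := by
  classical
  set f : E → (Fin 2 → ℝ) := ⇑(WithLp.equiv 2 (Fin 2 → ℝ)) with hf
  have hlip : LipschitzWith 1 f := PiLp.lipschitzWith_ofLp 2 (fun _ : Fin 2 => ℝ)
  have himg := hlip.hausdorffMeasure_image_le (by norm_num : (0:ℝ) ≤ 2) (closedBall x ρ)
  rw [ENNReal.coe_one, ENNReal.one_rpow, one_mul] at himg
  refine le_trans ?_ himg
  -- the image contains the cube ∏ [x i - ρ/2, x i + ρ/2]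
  have hcube : Icc (fun i => x i - ρ/2) (fun i => x i + ρ/2) ⊆ f '' closedBall x ρ := by
    intro p hp
    refine ⟨(WithLp.equiv 2 (Fin 2 → ℝ)).symm p, ?_, by simp [hf]⟩
    rw [mem_closedBall, dist_eq_norm]
    have hcoord : ∀ i, |((WithLp.equiv 2 (Fin 2 → ℝ)).symm p - x) i| ≤ ρ/2 := by
      intro i
      have h1 := hp.1 i
      have h2 := hp.2 i
      have : ((WithLp.equiv 2 (Fin 2 → ℝ)).symm p - x) i = p i - x i := rfl
      rw [this, abs_le]
      constructor <;> [linarith; linarith]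
    have hn : ‖(WithLp.equiv 2 (Fin 2 → ℝ)).symm p - x‖^2 ≤ ρ^2 := by
      rw [EuclideanSpace.norm_eq, Real.sq_sqrt (by positivity)]
      have h0 := hcoord 0
      have h1 := hcoord 1
      rw [Fin.sum_univ_two]
      simp only [Real.norm_eq_abs]
      nlinarith [sq_abs (((WithLp.equiv 2 (Fin 2 → ℝ)).symm p - x) 0),
        sq_abs (((WithLp.equiv 2 (Fin 2 → ℝ)).symm p - x) 1), abs_nonneg (((WithLp.equiv 2 (Fin 2 → ℝ)).symm p - x) 0), abs_nonneg (((WithLp.equiv 2 (Fin 2 → ℝ)).symm p - x) 1)]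
    nlinarith [norm_nonneg ((WithLp.equiv 2 (Fin 2 → ℝ)).symm p - x)]
  have hμcube : ENNReal.ofReal (ρ^2) ≤ μH[(2:ℝ)] (Icc (fun i => x i - ρ/2) (fun i => x i + ρ/2)) := by
    have hcast : (μH[(2:ℝ)] : Measure (Fin 2 → ℝ)) = volume := by
      have := MeasureTheory.hausdorffMeasure_pi_real (ι := Fin 2)
      simpa using this
    rw [hcast, Real.volume_Icc_pi]
    have : ∀ i : Fin 2, (fun i => x i + ρ/2) i - (fun i => x i - ρ/2) i = ρ := by
      intro i; ring
    rw [Fin.prod_univ_two, this 0, this 1, ← ENNReal.ofReal_mul hρ]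
    apply le_of_eq
    congr 1
    ring
  exact le_trans hμcube (measure_mono hcube)

/-- If on a set `S` some linear functional separates points at rate 1/4,
and `S` has diameter ≤ 2R, then its 1-Hausdorff measure is at most 16R. -/
lemma hausdorff_graph_bound {S : Set E} {e' : E} (he' : ‖e'‖ = 1) {R : ℝ} (hR : 0 ≤ R)
    (hsep : ∀ x ∈ S, ∀ y ∈ S, (1/4) * ‖y - x‖ ≤ |⟪y - x, e'⟫| )
    (hdiam : ∀ x ∈ S, ∀ y ∈ S, ‖y - x‖ ≤ 2*R) :
    μH[(1:ℝ)] S ≤ ENNReal.ofReal (16 * R) := by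
  classical
  rcases S.eq_empty_or_nonempty with hS | ⟨s₀, hs₀⟩
  · simp [hS]
  set g : E → ℝ := fun p => ⟪p, e'⟫ with hg
  set f : ℝ → E := Function.invFunOn g S with hfdef
  have hginv : ∀ x ∈ S, f (g x) ∈ S ∧ g (f (g x)) = g x := by
    intro x hx
    exact ⟨Function.invFunOn_mem ⟨x, hx, rfl⟩, Function.invFunOn_eq ⟨x, hx, rfl⟩⟩
  have hsep' : ∀ x ∈ S, ∀ y ∈ S, dist x y ≤ 4 * dist (g x) (g y) := by
    intro x hx y hy
    have h := hsep x hx y hy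
    have hgeq : g y - g x = ⟪y - x, e'⟫ := by simp [hg, inner_sub_left]
    rw [dist_eq_norm, Real.dist_eq]
    have habs : |g x - g y| = |⟪y - x, e'⟫| := by rw [abs_sub_comm, hgeq]
    rw [norm_sub_rev, habs]
    linarith
  have hfS : f '' (g '' S) = S := by
    apply Subset.antisymm
    · rintro _ ⟨_, ⟨x, hx, rfl⟩, rfl⟩
      exact (hginv x hx).1
    · intro x hx
      refine ⟨g x, ⟨x, hx, rfl⟩, ?_⟩
      obtain ⟨hmem, heq⟩ := hginv x hx
      have hd := hsep' x hx (f (g x)) hmem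
      rw [heq] at hd
      simp only [dist_self, mul_zero] at hd
      have : dist x (f (g x)) = 0 := le_antisymm hd dist_nonneg
      rw [dist_eq_zero] at this
      rw [← this]
  have hlip : LipschitzOnWith 4 f (g '' S) := by
    rw [lipschitzOnWith_iff_dist_le_mul]
    rintro _ ⟨x, hx, rfl⟩ _ ⟨y, hy, rfl⟩
    obtain ⟨hmx, hex⟩ := hginv x hx
    obtain ⟨hmy, hey⟩ := hginv y hy
    have := hsep' (f (g x)) hmx (f (g y)) hmy
    rw [hex, hey] at this
    push_cast
    exact this
  have himg := hlip.hausdorffMeasure_image_le (by norm_num : (0:ℝ) ≤ 1)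
  rw [hfS, ENNReal.rpow_one] at himg
  have hsub : g '' S ⊆ Icc (g s₀ - 2*R) (g s₀ + 2*R) := by
    rintro _ ⟨x, hx, rfl⟩
    have hinner : |⟪x - s₀, e'⟫| ≤ 2*R := by
      calc |⟪x - s₀, e'⟫| ≤ ‖x - s₀‖ * ‖e'‖ := abs_real_inner_le_norm _ _
        _ = ‖x - s₀‖ := by rw [he', mul_one]
        _ ≤ 2*R := hdiam s₀ hs₀ x hx
    have hgx : g x - g s₀ = ⟪x - s₀, e'⟫ := by simp [hg, inner_sub_left]
    rw [abs_le] at hinner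
    constructor <;> [linarith [hinner.1, hgx ▸ hinner.1]; linarith [hgx ▸ hinner.2]]
  have hIcc : μH[(1:ℝ)] (g '' S) ≤ ENNReal.ofReal (4*R) := by
    have hvol : (μH[(1:ℝ)] : Measure ℝ) = volume := by
      simpa using MeasureTheory.hausdorffMeasure_real
    rw [hvol]
    refine le_trans (measure_mono hsub) ?_
    rw [Real.volume_Icc]
    apply ENNReal.ofReal_le_ofReal
    ring_nf
    linarith
  refine le_trans himg (le_trans (mul_le_mul_right hIcc _) (le_of_eq ?_))
  have h4 : ((4:ℝ≥0):ℝ≥0∞) = ENNReal.ofReal 4 := by simp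
  rw [h4, ← ENNReal.ofReal_mul (by norm_num)]
  congr 1
  ring


lemma floor_close {a b c : ℝ} (hc : 0 < c) (h : ⌊a/c⌋ = ⌊b/c⌋) : |a - b| < c := by
  have h1 : (⌊a/c⌋ : ℝ) ≤ a/c := Int.floor_le _
  have h2 : a/c < ⌊a/c⌋ + 1 := Int.lt_floor_add_one _
  have h3 : (⌊b/c⌋ : ℝ) ≤ b/c := Int.floor_le _
  have h4 : b/c < ⌊b/c⌋ + 1 := Int.lt_floor_add_one _
  rw [h] at h1 h2
  have hab : |a/c - b/c| < 1 := by rw [abs_lt]; constructor <;> linarith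
  have : a - b = c * (a/c - b/c) := by field_simp
  rw [this, abs_mul, abs_of_pos hc]
  nlinarith [abs_nonneg (a/c - b/c)]

lemma floor_far {a b c : ℝ} (hc : 0 < c) {k k' : ℤ} (ha : ⌊a/c⌋ = k) (hb : ⌊b/c⌋ = k')
    (h3 : 3 ≤ |(k : ℝ) - k'|) : 2*c ≤ |a - b| := by
  have h1 : (k : ℝ) ≤ a/c := ha ▸ Int.floor_le _
  have h2 : a/c < k + 1 := ha ▸ Int.lt_floor_add_one _
  have h1' : (k' : ℝ) ≤ b/c := hb ▸ Int.floor_le _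
  have h2' : b/c < k' + 1 := hb ▸ Int.lt_floor_add_one _
  have hab : 2 ≤ |a/c - b/c| := by
    rcases abs_cases ((k:ℝ) - k') with ⟨he, hs⟩ | ⟨he, hs⟩ <;> rw [he] at h3 <;>
      rcases abs_cases (a/c - b/c) with ⟨hf, hg⟩ | ⟨hf, hg⟩ <;> rw [hf] <;> linarith
  have heq : a - b = c * (a/c - b/c) := by field_simp
  rw [heq, abs_mul, abs_of_pos hc]
  nlinarith

lemma coord_le_norm (v : E) (i : Fin 2) : |v i| ≤ ‖v‖ := by
  have h := norm_sq_coords v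
  have h0 : |v 0| ≤ ‖v‖ := by
    nlinarith [norm_nonneg v, sq_abs (v 0), sq_abs (v 1), abs_nonneg (v 0), sq_nonneg (v 1)]
  have h1 : |v 1| ≤ ‖v‖ := by
    nlinarith [norm_nonneg v, sq_abs (v 0), sq_abs (v 1), abs_nonneg (v 1), sq_nonneg (v 0)]
  fin_cases i
  · exact h0
  · exact h1

/-- THE KEY covering lemma. -/
lemma key {Z : Set E} (hZc : IsCompact Z) (hZn : Z.Nonempty) {r : ℝ} (hr : 0 < r) :
    μH[(1:ℝ)] (frontier (cthickening r Z)) ≤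
      ENNReal.ofReal (6000000 / r) * μH[(2:ℝ)] (cthickening (2*r) Z \ thickening (r/2) Z) := by
  classical
  set K := frontier (cthickening r Z) with hK
  set A := cthickening (2*r) Z \ thickening (r/2) Z with hA
  -- choose a direction for each point of K
  have hdir : ∀ x : E, ∃ u : E, ‖u‖ = 1 ∧ (x ∈ K →
      ∀ t p, 0 < t → t ≤ r → dist p (x - t • u) ≤ t/2 → infDist p Z ≤ r - t/2) := by
    intro x
    by_cases hx : x ∈ K
    · obtain ⟨u, hu, hc⟩ := exists_dir hZc hZn hr hx
      exact ⟨u, hu, fun _ => hc⟩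
    · exact ⟨vec 0, norm_vec 0, fun h => absurd h hx⟩
  choose u hu hcone using hdir
  have hsec : ∀ x : E, ∃ j : Fin 63, ‖u x - vec ((j:ℝ)/10)‖ ≤ 1/20 :=
    fun x => sector_cover _ (hu x)
  choose sec hsecle using hsec
  set c : ℝ := r/6 with hc
  have hc0 : 0 < c := by rw [hc]; positivity
  set idx : E → ℤ × ℤ := fun p => (⌊p 0 / c⌋, ⌊p 1 / c⌋) with hidx
  -- points inside the same cell are r/4-close
  have hcell : ∀ p q : E, idx p = idx q → ‖p - q‖ ≤ r/4 := by
    intro p q hpq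
    have h0 : |p 0 - q 0| < c := floor_close hc0 (congrArg Prod.fst hpq)
    have h1 : |p 1 - q 1| < c := floor_close hc0 (congrArg Prod.snd hpq)
    have hs : ‖p - q‖^2 ≤ 2*c^2 := by
      rw [norm_sq_coords]
      have e0 : (p - q) 0 = p 0 - q 0 := rfl
      have e1 : (p - q) 1 = p 1 - q 1 := rfl
      rw [e0, e1]
      nlinarith [sq_abs (p 0 - q 0), sq_abs (p 1 - q 1), abs_nonneg (p 0 - q 0),
        abs_nonneg (p 1 - q 1)]
    nlinarith [norm_nonneg (p - q)]
  -- pair estimate inside a fixed cell and sector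
  have hpiece : ∀ (j : Fin 63) (S : Set E), (∀ x ∈ S, x ∈ K) →
      (∀ x ∈ S, ∀ y ∈ S, idx x = idx y) → (∀ x ∈ S, sec x = j) →
      μH[(1:ℝ)] S ≤ ENNReal.ofReal (2*r) := by
    intro j S hSK hScell hSsec
    have h16 : ENNReal.ofReal (2*r) = ENNReal.ofReal (16 * (r/8)) := by congr 1; ring
    rw [h16]
    apply hausdorff_graph_bound (norm_pvec ((j:ℝ)/10)) (by positivity)
    · -- separation
      intro x hx y hy
      rcases eq_or_ne y x with rfl | hne
      · simp
      have hvr : ‖y - x‖ ≤ r/4 := hcell y x (hScell y hy x hx)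
      have hvr' : ‖y - x‖ ≤ r := by linarith
      have hxK := hSK x hx
      have hyK := hSK y hy
      have hx1 : -(9/10) * ‖y - x‖ < ⟪y - x, u x⟫ :=
        pair_inner hZc hZn hr hxK hyK (hu x) (hcone x hxK) hne hvr'
      have hy1 : -(9/10) * ‖x - y‖ < ⟪x - y, u y⟫ := by
        apply pair_inner hZc hZn hr hyK hxK (hu y) (hcone y hyK) (fun h => hne h.symm)
        rwa [norm_sub_rev]
      set e : E := vec ((j:ℝ)/10) with he
      have hex : ‖u x - e‖ ≤ 1/20 := by rw [he, ← hSsec x hx]; exact hsecle x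
      have hey : ‖u y - e‖ ≤ 1/20 := by rw [he, ← hSsec y hy]; exact hsecle y
      set v : E := y - x with hv
      have hn : ‖x - y‖ = ‖v‖ := by rw [hv, norm_sub_rev]
      have hcs1 : |⟪v, e - u x⟫| ≤ ‖v‖ * (1/20) := by
        calc |⟪v, e - u x⟫| ≤ ‖v‖ * ‖e - u x‖ := abs_real_inner_le_norm _ _
          _ ≤ ‖v‖ * (1/20) := by
              have : ‖e - u x‖ ≤ 1/20 := by rwa [norm_sub_rev]
              exact mul_le_mul_of_nonneg_left this (norm_nonneg v)
      have hcs2 : |⟪v, e - u y⟫| ≤ ‖v‖ * (1/20) := by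
        calc |⟪v, e - u y⟫| ≤ ‖v‖ * ‖e - u y‖ := abs_real_inner_le_norm _ _
          _ ≤ ‖v‖ * (1/20) := by
              have : ‖e - u y‖ ≤ 1/20 := by rwa [norm_sub_rev]
              exact mul_le_mul_of_nonneg_left this (norm_nonneg v)
      have hsplit1 : ⟪v, e⟫ = ⟪v, u x⟫ + ⟪v, e - u x⟫ := by
        rw [← inner_add_right]
        congr 1
        abel
      have hsplit2 : ⟪v, e⟫ = ⟪v, u y⟫ + ⟪v, e - u y⟫ := by
        rw [← inner_add_right]
        congr 1
        abel
      have hvuy : ⟪v, u y⟫ = -⟪x - y, u y⟫ := by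
        rw [hv, ← inner_neg_left]
        congr 1
        abel
      have habs : |⟪v, e⟫| ≤ (19/20) * ‖v‖ := by
        rw [abs_le]
        constructor
        · rw [hsplit1]
          have := abs_le.1 hcs1
          nlinarith
        · rw [hsplit2, hvuy]
          have := abs_le.1 hcs2
          rw [hn] at hy1
          nlinarith
      have hpyth := pythagoras ((j:ℝ)/10) v
      rw [← he] at hpyth
      have hperp : (1/16) * ‖v‖^2 ≤ ⟪v, pvec ((j:ℝ)/10)⟫^2 := by
        nlinarith [sq_abs ⟪v, e⟫, abs_nonneg ⟪v, e⟫, norm_nonneg v]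
      nlinarith [sq_abs ⟪v, pvec ((j:ℝ)/10)⟫, abs_nonneg ⟪v, pvec ((j:ℝ)/10)⟫,
        norm_nonneg v]
    · -- diameter
      intro x hx y hy
      have := hcell y x (hScell y hy x hx)
      linarith
  -- occupied cells
  have hKb : Bornology.IsBounded K :=
    (hZc.isBounded.cthickening (δ := r)).subset isClosed_cthickening.frontier_subset
  obtain ⟨R, hR⟩ := hKb.subset_closedBall 0
  set T : Set (ℤ × ℤ) := idx '' K with hT
  have hTfin : T.Finite := by
    apply Set.Finite.subset (Set.finite_Icc (⌊(-R)/c⌋, ⌊(-R)/c⌋) (⌊R/c⌋, ⌊R/c⌋))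
    rintro ⟨k, l⟩ ⟨x, hxK, heq⟩
    have hxn : ‖x‖ ≤ R := by
      have := hR hxK
      rwa [mem_closedBall, dist_zero_right] at this
    have hx0 : |x 0| ≤ R := le_trans (coord_le_norm x 0) hxn
    have hx1 : |x 1| ≤ R := le_trans (coord_le_norm x 1) hxn
    rw [abs_le] at hx0 hx1
    have hk : k = ⌊x 0 / c⌋ := (congrArg Prod.fst heq).symm
    have hl : l = ⌊x 1 / c⌋ := (congrArg Prod.snd heq).symm
    rw [Set.mem_Icc, hk, hl]
    constructor
    · constructor
      · exact Int.floor_mono ((div_le_div_iff_of_pos_right hc0).2 hx0.1)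
      · exact Int.floor_mono ((div_le_div_iff_of_pos_right hc0).2 hx1.1)
    · constructor
      · exact Int.floor_mono ((div_le_div_iff_of_pos_right hc0).2 hx0.2)
      · exact Int.floor_mono ((div_le_div_iff_of_pos_right hc0).2 hx1.2)
  set Tf : Finset (ℤ × ℤ) := hTfin.toFinset with hTfdef
  -- the covering bound
  have hsum1 : μH[(1:ℝ)] K ≤ (Tf.card : ℝ≥0∞) * ENNReal.ofReal (126*r) := by
    have hcover : K ⊆ ⋃ q ∈ Tf, ⋃ j : Fin 63, {x | x ∈ K ∧ idx x = q ∧ sec x = j} := by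
      intro x hx
      have hmem : idx x ∈ Tf := by
        rw [hTfdef, Set.Finite.mem_toFinset]
        exact ⟨x, hx, rfl⟩
      exact Set.mem_biUnion hmem (Set.mem_iUnion.2 ⟨sec x, hx, rfl, rfl⟩)
    calc μH[(1:ℝ)] K
        ≤ ∑ q ∈ Tf, μH[(1:ℝ)] (⋃ j : Fin 63, {x | x ∈ K ∧ idx x = q ∧ sec x = j}) :=
          le_trans (measure_mono hcover) (measure_biUnion_finset_le _ _)
      _ ≤ ∑ q ∈ Tf, ∑ j : Fin 63, μH[(1:ℝ)] {x | x ∈ K ∧ idx x = q ∧ sec x = j} :=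
          Finset.sum_le_sum fun q _ => measure_iUnion_fintype_le _ _
      _ ≤ ∑ q ∈ Tf, ∑ _j : Fin 63, ENNReal.ofReal (2*r) := by
          refine Finset.sum_le_sum fun q _ => Finset.sum_le_sum fun j _ => ?_
          exact hpiece j _ (fun x hx => hx.1)
            (fun x hx y hy => by rw [hx.2.1, hy.2.1]) (fun x hx => hx.2.2)
      _ = (Tf.card : ℝ≥0∞) * ((63:ℕ) * ENNReal.ofReal (2*r)) := by
          rw [Finset.sum_const, Finset.sum_const, Finset.card_univ, Fintype.card_fin,
            nsmul_eq_mul, nsmul_eq_mul]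
      _ = (Tf.card : ℝ≥0∞) * ENNReal.ofReal (126*r) := by
          congr 1
          rw [show ((63:ℕ):ℝ≥0∞) = ENNReal.ofReal 63 by simp,
            ← ENNReal.ofReal_mul (by norm_num)]
          congr 1
          ring
  -- representatives
  have hrep : ∀ q : ℤ × ℤ, ∃ x : E, q ∈ Tf → (x ∈ K ∧ idx x = q) := by
    intro q
    by_cases hq : q ∈ Tf
    · obtain ⟨x, hx, he⟩ := (Set.Finite.mem_toFinset hTfin).1 hq
      exact ⟨x, fun _ => ⟨hx, he⟩⟩
    · exact ⟨0, fun h => absurd h hq⟩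
  choose xq hxq using hrep
  set B : ℤ × ℤ → Set E := fun q => closedBall (xq q - (r/17) • u (xq q)) (r/51) with hB
  -- each ball sits in the annulus A
  have hBA : ∀ q ∈ Tf, B q ⊆ A := by
    intro q hq p hp
    obtain ⟨hxK, _⟩ := hxq q hq
    rw [hB] at hp
    simp only [mem_closedBall] at hp
    have hd : infDist p Z ≤ r - (r/17)/2 :=
      hcone _ hxK (r/17) p (by positivity) (by nlinarith) (by linarith)
    have hdx : dist (xq q) p ≤ r/17 + r/51 := by
      have h1 : dist (xq q) (xq q - (r/17) • u (xq q)) = r/17 := by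
        rw [dist_eq_norm]
        have : xq q - (xq q - (r/17) • u (xq q)) = (r/17) • u (xq q) := by abel
        rw [this, norm_smul, Real.norm_eq_abs, hu, mul_one, abs_of_pos (by positivity)]
      calc dist (xq q) p
          ≤ dist (xq q) (xq q - (r/17) • u (xq q)) + dist (xq q - (r/17) • u (xq q)) p :=
            dist_triangle _ _ _
        _ ≤ r/17 + r/51 := by
            rw [h1, dist_comm (xq q - (r/17) • u (xq q)) p]
            linarith
    have hlow : r - (r/17 + r/51) ≤ infDist p Z := by
      have h1 : infDist (xq q) Z ≤ infDist p Z + dist (xq q) p := infDist_le_infDist_add_dist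
      have h2 : infDist (xq q) Z = r := infDist_of_frontier hZn hr.le hxK
      linarith
    rw [hA]
    constructor
    · obtain ⟨z, hz, hdz⟩ := hZc.exists_infDist_eq_dist hZn p
      exact mem_cthickening_of_dist_le p z _ _ hz (by rw [← hdz]; linarith)
    · intro hmem
      rw [mem_thickening_iff_infDist_lt hZn] at hmem
      have : r - (r/17 + r/51) < r/2 := by linarith
      nlinarith
  -- disjointness within a congruence class
  have hdisj : ∀ cc : ZMod 3 × ZMod 3,
      ((Tf.filter (fun q => ((q.1 : ZMod 3), (q.2 : ZMod 3)) = cc)) : Set (ℤ × ℤ)).PairwiseDisjoint B := by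
    intro cc q hq q' hq' hne
    rw [Finset.mem_coe, Finset.mem_filter] at hq hq'
    have hcc : ((q.1 : ZMod 3), (q.2 : ZMod 3)) = ((q'.1 : ZMod 3), (q'.2 : ZMod 3)) := by
      rw [hq.2, hq'.2]
    have hd1 : (3:ℤ) ∣ q'.1 - q.1 := by
      have h := congrArg Prod.fst hcc
      rw [ZMod.intCast_eq_intCast_iff] at h
      exact Int.ModEq.dvd h
    have hd2 : (3:ℤ) ∣ q'.2 - q.2 := by
      have h := congrArg Prod.snd hcc
      rw [ZMod.intCast_eq_intCast_iff] at h
      exact Int.ModEq.dvd h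
    obtain ⟨hxK, hxidx⟩ := hxq q hq.1
    obtain ⟨hxK', hxidx'⟩ := hxq q' hq'.1
    -- the representatives are at distance ≥ r/3
    have hfar : 2*c ≤ ‖xq q - xq q'‖ := by
      have hcomp : q.1 ≠ q'.1 ∨ q.2 ≠ q'.2 := by
        by_contra hcon
        push_neg at hcon
        exact hne (Prod.ext hcon.1 hcon.2)
      have hget : ∃ i : Fin 2, 2*c ≤ |(xq q) i - (xq q') i| := by
        rcases hcomp with h1 | h1
        · refine ⟨0, floor_far hc0 (congrArg Prod.fst hxidx) (congrArg Prod.fst hxidx') ?_⟩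
          have : 3 ≤ |q.1 - q'.1| := by
            rcases hd1 with ⟨m, hm⟩
            have hm' : q.1 - q'.1 = -(3*m) := by linarith [hm]
            rw [hm']
            have hm0 : m ≠ 0 := by
              rintro rfl
              apply h1
              omega
            rw [abs_neg, abs_mul]
            have : 1 ≤ |m| := by
              rcases abs_cases m with ⟨h, _⟩ | ⟨h, _⟩ <;> omega
            have h3 : |(3:ℤ)| = 3 := by norm_num
            nlinarith [abs_nonneg m]
          calc (3:ℝ) ≤ |((q.1 - q'.1 : ℤ) : ℝ)| := by
                rw [← Int.cast_abs]
                exact_mod_cast this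
            _ = |(q.1 : ℝ) - (q'.1 : ℝ)| := by push_cast; ring_nf
        · refine ⟨1, floor_far hc0 (congrArg Prod.snd hxidx) (congrArg Prod.snd hxidx') ?_⟩
          have : 3 ≤ |q.2 - q'.2| := by
            rcases hd2 with ⟨m, hm⟩
            have hm' : q.2 - q'.2 = -(3*m) := by linarith [hm]
            rw [hm']
            have hm0 : m ≠ 0 := by
              rintro rfl
              apply h1
              omega
            rw [abs_neg, abs_mul]
            have : 1 ≤ |m| := by
              rcases abs_cases m with ⟨h, _⟩ | ⟨h, _⟩ <;> omega
            have h3 : |(3:ℤ)| = 3 := by norm_num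
            nlinarith [abs_nonneg m]
          calc (3:ℝ) ≤ |((q.2 - q'.2 : ℤ) : ℝ)| := by
                rw [← Int.cast_abs]
                exact_mod_cast this
            _ = |(q.2 : ℝ) - (q'.2 : ℝ)| := by push_cast; ring_nf
      obtain ⟨i, hi⟩ := hget
      have : |(xq q - xq q') i| = |(xq q) i - (xq q') i| := rfl
      exact le_trans hi (this ▸ coord_le_norm (xq q - xq q') i)
    -- hence the two balls are disjoint
    rw [hB]
    apply closedBall_disjoint_closedBall
    have htri : ‖xq q - xq q'‖ ≤
        dist (xq q) (xq q - (r/17) • u (xq q)) +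
        dist (xq q - (r/17) • u (xq q)) (xq q' - (r/17) • u (xq q')) +
        dist (xq q' - (r/17) • u (xq q')) (xq q') := by
      rw [← dist_eq_norm]
      exact dist_triangle4 _ _ _ _
    have hn1 : dist (xq q) (xq q - (r/17) • u (xq q)) = r/17 := by
      rw [dist_eq_norm]
      have heq2 : xq q - (xq q - (r/17) • u (xq q)) = (r/17) • u (xq q) := by abel
      rw [heq2, norm_smul, Real.norm_eq_abs, hu, mul_one, abs_of_pos (by positivity)]
    have hn2 : dist (xq q' - (r/17) • u (xq q')) (xq q') = r/17 := by
      rw [dist_comm, dist_eq_norm]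
      have heq2 : xq q' - (xq q' - (r/17) • u (xq q')) = (r/17) • u (xq q') := by abel
      rw [heq2, norm_smul, Real.norm_eq_abs, hu, mul_one, abs_of_pos (by positivity)]
    have hcc2 : 2*c = r/3 := by rw [hc]; ring
    rw [hn1, hn2] at htri
    rw [hcc2] at hfar
    linarith
  -- the counting bound
  have hcount : (Tf.card : ℝ≥0∞) * ENNReal.ofReal ((r/51)^2) ≤ 9 * μH[(2:ℝ)] A := by
    classical
    have hcard : Tf.card = ∑ cc ∈ (Finset.univ : Finset (ZMod 3 × ZMod 3)),
        (Tf.filter (fun q => ((q.1 : ZMod 3), (q.2 : ZMod 3)) = cc)).card :=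
      Finset.card_eq_sum_card_fiberwise (fun q _ => Finset.mem_univ _)
    have hclass : ∀ cc : ZMod 3 × ZMod 3,
        ((Tf.filter (fun q => ((q.1 : ZMod 3), (q.2 : ZMod 3)) = cc)).card : ℝ≥0∞) *
          ENNReal.ofReal ((r/51)^2) ≤ μH[(2:ℝ)] A := by
      intro cc
      set F := Tf.filter (fun q => ((q.1 : ZMod 3), (q.2 : ZMod 3)) = cc) with hF
      have hmeas : ∀ q ∈ F, MeasurableSet (B q) := fun q _ =>
        measurableSet_closedBall
      have hunion := measure_biUnion_finset (μ := μH[(2:ℝ)]) (hdisj cc) hmeas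
      have hsub : (⋃ q ∈ F, B q) ⊆ A := by
        intro p hp
        rw [Set.mem_iUnion₂] at hp
        obtain ⟨q, hqF, hpq⟩ := hp
        exact hBA q (Finset.mem_of_mem_filter q hqF) hpq
      have hball : ∀ q ∈ F, ENNReal.ofReal ((r/51)^2) ≤ μH[(2:ℝ)] (B q) := by
        intro q _
        exact hausdorff_ball_lower _ (by positivity)
      calc (F.card : ℝ≥0∞) * ENNReal.ofReal ((r/51)^2)
          = ∑ _q ∈ F, ENNReal.ofReal ((r/51)^2) := by
            rw [Finset.sum_const, nsmul_eq_mul]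
        _ ≤ ∑ q ∈ F, μH[(2:ℝ)] (B q) := Finset.sum_le_sum hball
        _ = μH[(2:ℝ)] (⋃ q ∈ F, B q) := hunion.symm
        _ ≤ μH[(2:ℝ)] A := measure_mono hsub
    calc (Tf.card : ℝ≥0∞) * ENNReal.ofReal ((r/51)^2)
        = ∑ cc : ZMod 3 × ZMod 3,
            ((Tf.filter (fun q => ((q.1 : ZMod 3), (q.2 : ZMod 3)) = cc)).card : ℝ≥0∞) *
              ENNReal.ofReal ((r/51)^2) := by
          rw [← Finset.sum_mul]
          congr 1
          rw [hcard]
          push_cast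
          rfl
      _ ≤ ∑ _cc : ZMod 3 × ZMod 3, μH[(2:ℝ)] A := Finset.sum_le_sum fun cc _ => hclass cc
      _ = 9 * μH[(2:ℝ)] A := by
          rw [Finset.sum_const, Finset.card_univ, nsmul_eq_mul]
          congr 1
  -- final arithmetic
  rcases eq_or_ne (μH[(2:ℝ)] A) ∞ with hAinf | hAfin
  · rw [hAinf, ENNReal.mul_top]
    · exact le_top
    · simp only [ne_eq, ENNReal.ofReal_eq_zero, not_le]
      positivity
  · -- finite case: pass to the reals
    set m := (μH[(2:ℝ)] A).toReal with hm
    have hm0 : 0 ≤ m := ENNReal.toReal_nonneg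
    set n := Tf.card with hn
    have hcr : (n : ℝ) * ((r/51)^2) ≤ 9 * m := by
      have := ENNReal.toReal_mono (by
          exact ENNReal.mul_ne_top (by simp) hAfin) hcount
      rw [ENNReal.toReal_mul, ENNReal.toReal_mul, ENNReal.toReal_ofReal (by positivity),
        ENNReal.toReal_natCast] at this
      simpa using this
    have hreal : (n : ℝ) * (126*r) ≤ (6000000/r) * m := by
      have hstep := mul_le_mul_of_nonneg_left hcr
        (show (0:ℝ) ≤ 327726/r by positivity)
      have hl : 327726/r * ((n:ℝ) * ((r/51)^2)) = (n:ℝ) * (126*r) := by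
        field_simp
        ring
      rw [hl] at hstep
      have : 327726/r * (9*m) ≤ 6000000/r * m := by
        rw [div_mul_eq_mul_div, div_mul_eq_mul_div, div_le_div_iff_of_pos_right hr]
        nlinarith
      linarith
    calc μH[(1:ℝ)] K ≤ (n : ℝ≥0∞) * ENNReal.ofReal (126*r) := hsum1
      _ = ENNReal.ofReal ((n:ℝ) * (126*r)) := by
          rw [show ENNReal.ofReal ((n:ℝ) * (126*r))
              = ENNReal.ofReal (n:ℝ) * ENNReal.ofReal (126*r) from
            ENNReal.ofReal_mul (by positivity), ENNReal.ofReal_natCast]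
      _ ≤ ENNReal.ofReal ((6000000/r) * m) := ENNReal.ofReal_le_ofReal hreal
      _ = ENNReal.ofReal (6000000/r) * ENNReal.ofReal m := by
          rw [ENNReal.ofReal_mul (by positivity)]
      _ = ENNReal.ofReal (6000000/r) * μH[(2:ℝ)] A := by
          rw [hm, ENNReal.ofReal_toReal hAfin]

lemma tendsto_mul_pos {c : ℝ} (hc : 0 < c) :
    Tendsto (fun r : ℝ => c * r) (𝓝[>](0:ℝ)) (𝓝[>](0:ℝ)) := by
  apply tendsto_nhdsWithin_of_tendsto_nhds_of_eventually_within
  · have h : Tendsto (fun r : ℝ => c * r) (𝓝 (0:ℝ)) (𝓝 (c * 0)) :=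
      (continuous_const.mul continuous_id).tendsto 0
    rw [mul_zero] at h
    exact h.mono_left nhdsWithin_le_nhds
  · filter_upwards [eventually_mem_nhdsWithin] with r hr
    exact mul_pos hc hr

lemma tendsto_log_ratio {c : ℝ} (hc : 0 < c) :
    Tendsto (fun r : ℝ => |Real.log r| / |Real.log (c*r)|) (𝓝[>](0:ℝ)) (𝓝 1) := by
  have hlog : Tendsto (fun r : ℝ => -Real.log r) (𝓝[>](0:ℝ)) atTop :=
    tendsto_neg_atBot_atTop.comp Real.tendsto_log_nhdsGT_zero
  set a : ℝ := -Real.log c with hadef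
  have hgen : Tendsto (fun s : ℝ => s / (s + a)) atTop (𝓝 1) := by
    have h1 : Tendsto (fun s : ℝ => a / (s + a)) atTop (𝓝 0) :=
      Filter.Tendsto.div_atTop tendsto_const_nhds (tendsto_atTop_add_const_right _ _ tendsto_id)
    have h2 : Tendsto (fun s : ℝ => 1 - a / (s + a)) atTop (𝓝 (1 - 0)) :=
      tendsto_const_nhds.sub h1
    rw [sub_zero] at h2
    apply h2.congr'
    filter_upwards [eventually_ge_atTop (|a| + 1)] with s hs
    have hsa : 0 < s + a := by
      have := abs_nonneg a
      have := neg_abs_le a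
      linarith
    field_simp
    ring
  have hcomp := hgen.comp hlog
  apply hcomp.congr'
  have hev : ∀ᶠ r in 𝓝[>](0:ℝ), -Real.log r ≥ |a| + |Real.log c| + 1 :=
    hlog.eventually (eventually_ge_atTop _)
  filter_upwards [hev, eventually_mem_nhdsWithin] with r hr hr0
  have hr0' : (0:ℝ) < r := hr0
  have hlr : Real.log r ≤ -1 := by
    have := abs_nonneg a
    have := abs_nonneg (Real.log c)
    linarith
  have hlcr : Real.log (c*r) = Real.log c + Real.log r := Real.log_mul hc.ne' hr0'.ne'
  have hneg : Real.log (c*r) ≤ -1 := by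
    have h1 := le_abs_self (Real.log c)
    have h2 := abs_nonneg a
    rw [hlcr]
    linarith
  have habs1 : |Real.log r| = -Real.log r := abs_of_nonpos (by linarith)
  have habs2 : |Real.log (c*r)| = -(Real.log c + Real.log r) := by
    rw [hlcr] at hneg ⊢
    exact abs_of_nonpos (by linarith)
  show (fun s : ℝ => s / (s + a)) (-Real.log r) = |Real.log r| / |Real.log (c*r)|
  rw [habs1, habs2, hadef]
  congr 1
  ring

lemma scaledV {Z : Set E} {c : ℝ} (hc : 0 < c)
    (h : Tendsto (fun r : ℝ => |Real.log r| *
      (μH[(2:ℝ)] (cthickening r Z)).toReal) (𝓝[>](0:ℝ)) (𝓝 Real.pi)) :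
    Tendsto (fun r : ℝ => |Real.log r| *
      (μH[(2:ℝ)] (cthickening (c*r) Z)).toReal) (𝓝[>](0:ℝ)) (𝓝 Real.pi) := by
  have hcomp := h.comp (tendsto_mul_pos hc)
  have hmul := (tendsto_log_ratio hc).mul hcomp
  rw [one_mul] at hmul
  apply hmul.congr'
  have hev : ∀ᶠ r in 𝓝[>](0:ℝ), Real.log (c*r) ≠ 0 := by
    have hlog : Tendsto (fun r : ℝ => -Real.log (c*r)) (𝓝[>](0:ℝ)) atTop :=
      (tendsto_neg_atBot_atTop.comp Real.tendsto_log_nhdsGT_zero).comp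
        (tendsto_mul_pos hc)
    filter_upwards [hlog.eventually (eventually_ge_atTop 1)] with r hr
    intro hzero
    simp only [Function.comp_apply, hzero] at hr
    norm_num at hr
  filter_upwards [hev] with r hr
  show |Real.log r| / |Real.log (c*r)| *
      ((fun s => |Real.log s| * (μH[(2:ℝ)] (cthickening s Z)).toReal) ((fun t => c*t) r))
    = |Real.log r| * (μH[(2:ℝ)] (cthickening (c*r) Z)).toReal
  simp only []
  have habs : |Real.log (c*r)| ≠ 0 := fun hx => hr (abs_eq_zero.1 hx)
  field_simp

/-- The deterministic statement. -/
lemma deterministic {Z : Set E} (hZc : IsCompact Z) (hZn : Z.Nonempty)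
    (h : Tendsto (fun r : ℝ => |Real.log r| *
      (μH[(2:ℝ)] (cthickening r Z)).toReal) (𝓝[>](0:ℝ)) (𝓝 Real.pi)) :
    Tendsto (fun r : ℝ => r * |Real.log r| *
      (μH[(1:ℝ)] (frontier (cthickening r Z))).toReal) (𝓝[>](0:ℝ)) (𝓝 0) := by
  have hπ : (0:ℝ) < Real.pi := Real.pi_pos
  -- scaled versions
  have h2 := scaledV (show (0:ℝ) < 2 by norm_num) h
  have hhalf := scaledV (show (0:ℝ) < 1/2 by norm_num) h
  have hquarter := scaledV (show (0:ℝ) < 1/4 by norm_num) h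
  -- eventual positivity/finiteness
  have hfin2 : ∀ᶠ r in 𝓝[>](0:ℝ), μH[(2:ℝ)] (cthickening (2*r) Z) ≠ ⊤ := by
    filter_upwards [h2.eventually (eventually_gt_nhds (by linarith : Real.pi/2 < Real.pi))]
      with r hr
    intro htop
    rw [htop] at hr
    simp at hr
    linarith
  have hfinhalf : ∀ᶠ r in 𝓝[>](0:ℝ), μH[(2:ℝ)] (cthickening ((1/2)*r) Z) ≠ ⊤ := by
    filter_upwards [hhalf.eventually (eventually_gt_nhds (by linarith : Real.pi/2 < Real.pi))]
      with r hr
    intro htop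
    rw [htop] at hr
    simp at hr
    linarith
  -- thickening squeeze
  have hthick : Tendsto (fun r : ℝ => |Real.log r| *
      (μH[(2:ℝ)] (thickening (r/2) Z)).toReal) (𝓝[>](0:ℝ)) (𝓝 Real.pi) := by
    apply tendsto_of_tendsto_of_tendsto_of_le_of_le' hquarter hhalf
    · filter_upwards [eventually_mem_nhdsWithin, hfinhalf] with r hr hfin
      have hrr : (0:ℝ) < r := hr
      have hsub : cthickening ((1/4)*r) Z ⊆ thickening (r/2) Z := by
        apply cthickening_subset_thickening' (by linarith) (by linarith)
      have hfin' : μH[(2:ℝ)] (thickening (r/2) Z) ≠ ⊤ := by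
        intro htop
        apply hfin
        have hsub2 : thickening (r/2) Z ⊆ cthickening ((1/2)*r) Z := by
          have : (r/2) = (1/2)*r := by ring
          rw [this]
          exact thickening_subset_cthickening _ _
        exact eq_top_iff.2 (htop ▸ measure_mono hsub2)
      have := ENNReal.toReal_mono hfin' (measure_mono hsub)
      have habs : 0 ≤ |Real.log r| := abs_nonneg _
      nlinarith
    · filter_upwards [eventually_mem_nhdsWithin, hfinhalf] with r hr hfin
      have hsub2 : thickening (r/2) Z ⊆ cthickening ((1/2)*r) Z := by
        have heq : (r/2) = (1/2)*r := by ring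
        rw [heq]
        exact thickening_subset_cthickening _ _
      have := ENNReal.toReal_mono hfin (measure_mono hsub2)
      have habs : 0 ≤ |Real.log r| := abs_nonneg _
      nlinarith
  -- the difference tends to 0
  have hdiff : Tendsto (fun r : ℝ => |Real.log r| *
      ((μH[(2:ℝ)] (cthickening (2*r) Z)).toReal -
        (μH[(2:ℝ)] (thickening (r/2) Z)).toReal)) (𝓝[>](0:ℝ)) (𝓝 0) := by
    have := h2.sub hthick
    rw [sub_self] at this
    apply this.congr
    intro r
    ring
  -- final squeeze
  apply squeeze_zero' (g := fun r => 6000000 * (|Real.log r| *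
      ((μH[(2:ℝ)] (cthickening (2*r) Z)).toReal -
        (μH[(2:ℝ)] (thickening (r/2) Z)).toReal)))
  · filter_upwards [eventually_mem_nhdsWithin] with r hr
    have : (0:ℝ) < r := hr
    positivity
  · filter_upwards [eventually_mem_nhdsWithin, hfin2] with r hr hfin
    have hr0 : (0:ℝ) < r := hr
    -- apply the key lemma
    have hkey := key hZc hZn hr0
    have hsubm : thickening (r/2) Z ⊆ cthickening (2*r) Z :=
      thickening_subset_cthickening_of_le (by linarith) _
    have hfinth : μH[(2:ℝ)] (thickening (r/2) Z) ≠ ⊤ :=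
      fun htop => hfin (eq_top_iff.2 (htop ▸ measure_mono hsubm))
    have hdiffm : μH[(2:ℝ)] (cthickening (2*r) Z \ thickening (r/2) Z)
        = μH[(2:ℝ)] (cthickening (2*r) Z) - μH[(2:ℝ)] (thickening (r/2) Z) :=
      measure_diff hsubm isOpen_thickening.measurableSet.nullMeasurableSet hfinth
    rw [hdiffm] at hkey
    have hrhs_ne : ENNReal.ofReal (6000000/r) *
        (μH[(2:ℝ)] (cthickening (2*r) Z) - μH[(2:ℝ)] (thickening (r/2) Z)) ≠ ⊤ := by
      apply ENNReal.mul_ne_top ENNReal.ofReal_ne_top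
      exact fun htop => hfin (by
        have := ENNReal.sub_eq_top_iff.1 htop
        exact this.1)
    have htoReal := ENNReal.toReal_mono hrhs_ne hkey
    rw [ENNReal.toReal_mul, ENNReal.toReal_ofReal (by positivity),
      ENNReal.toReal_sub_of_le (measure_mono hsubm) hfin] at htoReal
    have habs : 0 ≤ |Real.log r| := abs_nonneg _
    calc r * |Real.log r| * (μH[(1:ℝ)] (frontier (cthickening r Z))).toReal
        ≤ r * |Real.log r| * (6000000/r *
            ((μH[(2:ℝ)] (cthickening (2*r) Z)).toReal -
              (μH[(2:ℝ)] (thickening (r/2) Z)).toReal)) := by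
          apply mul_le_mul_of_nonneg_left htoReal (by positivity)
      _ = 6000000 * (|Real.log r| *
            ((μH[(2:ℝ)] (cthickening (2*r) Z)).toReal -
              (μH[(2:ℝ)] (thickening (r/2) Z)).toReal)) := by
          field_simp
  · have := hdiff.const_mul (6000000:ℝ)
    rw [mul_zero] at this
    exact this

end
end Stmt18Aux

theorem stmt_18 (Ω : Type*) [MeasureSpace Ω]
    [IsProbabilityMeasure (volume : Measure Ω)]
    (Z : Ω → NonemptyCompacts (EuclideanSpace ℝ (Fin 2)))
    (hvol : ∀ᵐ ω ∂(volume : Measure Ω),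
      Filter.Tendsto
        (fun r : ℝ => |Real.log r| *
          (μH[(2 : ℝ)] (Metric.cthickening r (Z ω : Set (EuclideanSpace ℝ (Fin 2))))).toReal)
        (𝓝[>] 0) (𝓝 Real.pi)) :
    ∀ᵐ ω ∂(volume : Measure Ω),
      Filter.limsup
          (fun r : ℝ => ((r * |Real.log r| *
            (μH[(1 : ℝ)]
              (frontier (Metric.cthickening r (Z ω : Set (EuclideanSpace ℝ (Fin 2)))))).toReal : ℝ) :
              EReal))
          (𝓝[>] 0) ≤ ((2 * Real.pi : ℝ) : EReal) := by
  filter_upwards [hvol] with ω hω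
  have h0 := Stmt18Aux.deterministic (Z ω).isCompact (Z ω).nonempty hω
  have hE : Filter.Tendsto (fun r : ℝ => ((r * |Real.log r| *
      (μH[(1 : ℝ)]
        (frontier (Metric.cthickening r (Z ω : Set (EuclideanSpace ℝ (Fin 2)))))).toReal : ℝ) :
        EReal)) (𝓝[>] (0:ℝ)) (𝓝 (((0:ℝ)) : EReal)) :=
    EReal.tendsto_coe.2 h0
  rw [hE.limsup_eq]
  exact EReal.coe_le_coe_iff.2 (by positivity)
end
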